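/- arXiv:2002.06313 — 4 statements merged into one kernel-verified Lean document; each statement's English description precedes it below -/
import Mathlib

section
/- Let E₀ ⊂ 𝒞Ω and let E be an s-minimal set in Ω with respect to E₀. Then 𝒢(χ_E, Ω) ≤ 𝒢(u, Ω) for every u ∈ 𝒲^s(Ω) such that u = χ_{E₀} in 𝒞Ω. -/
open MeasureTheory Set Filter Metric ENNReal

noncomputable section
set_option maxHeartbeats 1000000

/-- Euclidean space `ℝⁿ`. -/
abbrev Rn (n : ℕ) : Type := EuclideanSpace ℝ (Fin n)

/-- `Q(Ω) := ℝ²ⁿ \ (𝒞Ω × 𝒞Ω)`. -/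
def QQ {n : ℕ} (Ω : Set (Rn n)) : Set (Rn n × Rn n) := (Ωᶜ ×ˢ Ωᶜ)ᶜ

/-- A bounded open set has Lipschitz boundary: near every boundary point, in suitable
orthonormal coordinates, the set coincides with the region above the graph of a
Lipschitz function. -/
def HasLipschitzBoundary {n : ℕ} (Ω : Set (Rn n)) : Prop :=
  ∀ x ∈ frontier Ω, ∃ r : ℝ, 0 < r ∧ ∃ ν : Rn n, ‖ν‖ = 1 ∧
    ∃ (L : NNReal) (ψ : Rn n → ℝ), LipschitzWith L ψ ∧
      Ω ∩ Metric.ball x r =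
        {y ∈ Metric.ball x r | ψ (y - (inner ℝ y ν : ℝ) • ν) < (inner ℝ y ν : ℝ)}

/-- The Gagliardo `W^{s,1}(Ω)` seminorm `[u]_{W^{s,1}(Ω)}` (as an extended real). -/
def gagliardo (n : ℕ) (s : ℝ) (Ω : Set (Rn n)) (u : Rn n → ℝ) : ℝ≥0∞ :=
  ∫⁻ x in Ω, ∫⁻ y in Ω, ENNReal.ofReal (|u x - u y| / dist x y ^ ((n : ℝ) + s))

/-- The space `𝒲^s(Ω)` of measurable functions `u : ℝⁿ → ℝ` whose restriction to `Ω`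
belongs to `W^{s,1}(Ω)`. -/
def WsSpace (n : ℕ) (s : ℝ) (Ω : Set (Rn n)) : Set (Rn n → ℝ) :=
  {u | Measurable u ∧ IntegrableOn u Ω ∧ gagliardo n s Ω u < ⊤}

/-- `u` is an `s`-minimal function in `Ω`. -/
def IsMinimalFn (n : ℕ) (s : ℝ) (Ω : Set (Rn n)) (u : Rn n → ℝ) : Prop :=
  u ∈ WsSpace n s Ω ∧
    ∀ v ∈ WsSpace n s Ω, (∀ᵐ x ∂(volume.restrict Ωᶜ), v x = u x) →
      ∫ p in QQ Ω, (|u p.1 - u p.2| - |v p.1 - v p.2|) / dist p.1 p.2 ^ ((n : ℝ) + s) ≤ 0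

/-- The characteristic function `χ_E`. -/
def chi {n : ℕ} (E : Set (Rn n)) : Rn n → ℝ := E.indicator (fun _ => (1 : ℝ))

/-- The `s`-fractional perimeter `Per_s(E, Ω)` (as an extended real). -/
def perS (n : ℕ) (s : ℝ) (Ω E : Set (Rn n)) : ℝ≥0∞ :=
  (1 / 2 : ℝ≥0∞) * ∫⁻ p in QQ Ω,
    ENNReal.ofReal (|chi E p.1 - chi E p.2| / dist p.1 p.2 ^ ((n : ℝ) + s))

/-- `E` is an `s`-minimal set in `Ω`. -/
def IsMinimalSet (n : ℕ) (s : ℝ) (Ω E : Set (Rn n)) : Prop :=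
  MeasurableSet E ∧ perS n s Ω E < ⊤ ∧
    ∀ F : Set (Rn n), MeasurableSet F → F \ Ω = E \ Ω → perS n s Ω E ≤ perS n s Ω F

/-- The enlarged set `Ω_t := {y : dist(y, Ω) < t}`. -/
def nbhd {n : ℕ} (Ω : Set (Rn n)) (t : ℝ) : Set (Rn n) :=
  {y | Metric.infDist y Ω < t}

/-- The energy functional `𝒢(u, Ω)` (as an extended real). -/
def calG (n : ℕ) (s : ℝ) (Ω : Set (Rn n)) (u : Rn n → ℝ) : ℝ≥0∞ :=
  (1 / 2 : ℝ≥0∞) * ∫⁻ p in QQ Ω,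
    ENNReal.ofReal (|u p.1 - u p.2| / dist p.1 p.2 ^ ((n : ℝ) + s))

open Classical in
/-- `ũ`: equal to `u` on `𝒞Ω` and to `0` on `Ω`. -/
def tildeF {n : ℕ} (Ω : Set (Rn n)) (u : Rn n → ℝ) : Rn n → ℝ :=
  fun x => if x ∈ Ω then 0 else u x

/-- The renormalised energy functional `𝒢̃(u, Ω)`. -/
def calGt (n : ℕ) (s : ℝ) (Ω : Set (Rn n)) (u : Rn n → ℝ) : ℝ :=
  (1 / 2 : ℝ) * ∫ p in QQ Ω,
    (|u p.1 - u p.2| - |tildeF Ω u p.1 - tildeF Ω u p.2|) / dist p.1 p.2 ^ ((n : ℝ) + s)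

/-- The global tail `𝒯_s(u, Ω)` (as an extended real). -/
def tailS (n : ℕ) (s : ℝ) (Ω : Set (Rn n)) (u : Rn n → ℝ) : ℝ≥0∞ :=
  ∫⁻ x in Ω, ∫⁻ y in Ωᶜ, ENNReal.ofReal (|u y| / dist x y ^ ((n : ℝ) + s))

/-- The local tail `∫_A |φ(y)|/|x−y|^{n+s} dy`, integrated over `x ∈ Ω`. -/
def tailInt (n : ℕ) (s : ℝ) (Ω A : Set (Rn n)) (φ : Rn n → ℝ) : ℝ≥0∞ :=
  ∫⁻ x in Ω, ∫⁻ y in A, ENNReal.ofReal (|φ y| / dist x y ^ ((n : ℝ) + s))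


lemma layer_cake_pt (a b c : ℝ) (hc : 0 ≤ c) :
    ∫⁻ t : ℝ, ENNReal.ofReal (|(if t < a then (1:ℝ) else 0) - (if t < b then 1 else 0)| / c)
      = ENNReal.ofReal (|a - b| / c) := by
  have key : ∀ t : ℝ, ENNReal.ofReal |(if t < a then (1:ℝ) else 0) - (if t < b then 1 else 0)|
      = (Set.Ico (min a b) (max a b)).indicator (fun _ => (1:ℝ≥0∞)) t := by
    intro t
    by_cases ha : t < a <;> by_cases hb : t < b <;>
      simp [Set.indicator_apply, Set.mem_Ico, lt_min_iff, lt_max_iff, min_le_iff, ha, hb,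
        not_lt.mp, le_of_lt]
  have hbase : ∫⁻ t : ℝ, ENNReal.ofReal |(if t < a then (1:ℝ) else 0) - (if t < b then 1 else 0)|
      = ENNReal.ofReal |a - b| := by
    simp_rw [key]
    rw [lintegral_indicator measurableSet_Ico, setLIntegral_one, Real.volume_Ico,
      max_sub_min_eq_abs, abs_sub_comm]
  rcases eq_or_lt_of_le hc with h0 | h0
  · simp [← h0]
  · simp_rw [div_eq_mul_inv, ENNReal.ofReal_mul' (by positivity : (0:ℝ) ≤ c⁻¹)]
    rw [lintegral_mul_const' _ _ (by simp), hbase]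

theorem indicator_of_minimal_set_minimises_calG
    (n : ℕ) (hn : 1 ≤ n) (s : ℝ) (hs : s ∈ Set.Ioo (0 : ℝ) 1)
    (Ω : Set (Rn n)) (hΩo : IsOpen Ω) (hΩb : Bornology.IsBounded Ω)
    (hΩl : HasLipschitzBoundary Ω)
    (E₀ E : Set (Rn n)) (hE₀ : E₀ ⊆ Ωᶜ)
    (hE : IsMinimalSet n s Ω E) (hEdat : E \ Ω = E₀) :
    ∀ u ∈ WsSpace n s Ω, Set.EqOn u (chi E₀) Ωᶜ →
      calG n s Ω (chi E) ≤ calG n s Ω u := by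
  intro u hu huE
  obtain ⟨humeas, -, -⟩ := hu
  obtain ⟨hEmeas, hEfin, hEmin⟩ := hE
  -- the distance kernel
  set d : Rn n × Rn n → ℝ := fun p => dist p.1 p.2 ^ ((n : ℝ) + s) with hd
  have hdnn : ∀ p, 0 ≤ d p := fun p => Real.rpow_nonneg dist_nonneg _
  -- the layered integrand
  set g : Rn n × Rn n → ℝ → ℝ≥0∞ := fun p t =>
    ENNReal.ofReal (|(if t < u p.1 then (1:ℝ) else 0) - (if t < u p.2 then 1 else 0)| / d p)
    with hg
  have hgmeas : Measurable (fun z : (Rn n × Rn n) × ℝ => g z.1 z.2) := by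
    have h1 : Measurable fun z : (Rn n × Rn n) × ℝ => (if z.2 < u z.1.1 then (1:ℝ) else 0) :=
      Measurable.ite (measurableSet_lt measurable_snd
        (humeas.comp (measurable_fst.comp measurable_fst))) measurable_const measurable_const
    have h2 : Measurable fun z : (Rn n × Rn n) × ℝ => (if z.2 < u z.1.2 then (1:ℝ) else 0) :=
      Measurable.ite (measurableSet_lt measurable_snd
        (humeas.comp (measurable_snd.comp measurable_fst))) measurable_const measurable_const
    have hdm : Measurable fun z : (Rn n × Rn n) × ℝ => d z.1 := by
      simp only [hd]; fun_prop
    exact (((h1.sub h2).abs.div hdm)).ennreal_ofReal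
  -- coarea formula : calG u = ∫ₜ perS {u > t}
  have hcoarea : calG n s Ω u = ∫⁻ t : ℝ, perS n s Ω {x | t < u x} := by
    have h1 : ∀ p : Rn n × Rn n,
        ENNReal.ofReal (|u p.1 - u p.2| / d p) = ∫⁻ t : ℝ, g p t := fun p =>
      (layer_cake_pt (u p.1) (u p.2) (d p) (hdnn p)).symm
    have h2 : (∫⁻ p in QQ Ω, ∫⁻ t : ℝ, g p t)
        = ∫⁻ t : ℝ, ∫⁻ p in QQ Ω, g p t := by
      exact lintegral_lintegral_swap hgmeas.aemeasurable
    have htwo : (2 : ℝ≥0∞) * (1/2) = 1 := by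
      rw [one_div]; exact ENNReal.mul_inv_cancel (by norm_num) (by norm_num)
    have h3 : ∀ t : ℝ, (∫⁻ p in QQ Ω, g p t) = 2 * perS n s Ω {x | t < u x} := by
      intro t
      have hX : (∫⁻ p in QQ Ω, g p t) = ∫⁻ p in QQ Ω,
          ENNReal.ofReal (|chi {x | t < u x} p.1 - chi {x | t < u x} p.2|
            / dist p.1 p.2 ^ ((n:ℝ) + s)) :=
        lintegral_congr fun p => by
          simp [hg, hd, chi, Set.indicator_apply, Set.mem_setOf_eq]
      rw [hX, perS, ← mul_assoc, htwo, one_mul]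
    calc calG n s Ω u = (1/2 : ℝ≥0∞) * ∫⁻ p in QQ Ω, ∫⁻ t : ℝ, g p t := by
          rw [calG]; congr 1; exact lintegral_congr fun p => h1 p
      _ = (1/2 : ℝ≥0∞) * ∫⁻ t : ℝ, 2 * perS n s Ω {x | t < u x} := by
          rw [h2]
          exact congrArg _ (lintegral_congr h3)
      _ = ∫⁻ t : ℝ, perS n s Ω {x | t < u x} := by
          rw [lintegral_const_mul' _ _ (by simp), ← mul_assoc, one_div,
            ENNReal.inv_mul_cancel (by norm_num) (by norm_num), one_mul]
  -- minimality on each level set for t ∈ (0,1)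
  have hlevel : ∀ t ∈ Set.Ioo (0:ℝ) 1, perS n s Ω E ≤ perS n s Ω {x | t < u x} := by
    intro t ht
    refine hEmin _ (measurableSet_lt measurable_const humeas) ?_
    rw [hEdat]
    ext x
    simp only [Set.mem_diff, Set.mem_setOf_eq]
    constructor
    · rintro ⟨hx, hxΩ⟩
      have := huE hxΩ
      rw [this] at hx
      by_contra hxE
      simp [chi, Set.indicator_apply, hxE] at hx
      linarith [ht.1]
    · intro hx
      have hxΩ : x ∉ Ω := hE₀ hx
      refine ⟨?_, hxΩ⟩
      rw [huE hxΩ]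
      simp [chi, Set.indicator_apply, hx]
      exact ht.2
  -- conclude
  have hfin : calG n s Ω (chi E) = perS n s Ω E := rfl
  rw [hfin, hcoarea]
  calc perS n s Ω E = ∫⁻ _ in Set.Ioo (0:ℝ) 1, perS n s Ω E := by
        rw [setLIntegral_const, Real.volume_Ioo]; norm_num
    _ ≤ ∫⁻ t in Set.Ioo (0:ℝ) 1, perS n s Ω {x | t < u x} :=
        setLIntegral_mono' measurableSet_Ioo hlevel
    _ ≤ ∫⁻ t : ℝ, perS n s Ω {x | t < u x} := setLIntegral_le_lintegral _ _

end
end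

section
/- Let u ∈ 𝒲^s(Ω) be an s-minimal function in Ω. Then for every λ ∈ ℝ and every ε > 0, the function φ_{λ,ε}(x) := ε⁻¹ · min{ ε, max{ u(x) − λ + √ε, 0 } } is an s-minimal function in Ω. -/
open MeasureTheory Set Filter Metric ENNReal

noncomputable section
set_option maxHeartbeats 1000000

open Bornology

/-- clamp of `t - c` into `[lo, hi]`. -/
def clmp (lo hi c t : ℝ) : ℝ := min hi (max (t - c) lo)

lemma clmp_le_clmp {lo hi c : ℝ} {a b : ℝ} (hab : a ≤ b) : clmp lo hi c a ≤ clmp lo hi c b := by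
  unfold clmp
  exact min_le_min le_rfl (max_le_max (by linarith) le_rfl)

lemma clmp_sub_le {lo hi c : ℝ} {a b : ℝ} (hab : b ≤ a) :
    clmp lo hi c a - clmp lo hi c b ≤ a - b := by
  unfold clmp
  simp only [min_def, max_def]
  split_ifs <;> linarith

lemma abs_clmp_sub_clmp {lo hi c a b : ℝ} :
    |clmp lo hi c a - clmp lo hi c b| ≤ |a - b| := by
  rcases le_total b a with h | h
  · rw [abs_of_nonneg (by linarith [clmp_le_clmp (lo := lo) (hi := hi) (c := c) h]),
      abs_of_nonneg (by linarith)]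
    exact clmp_sub_le h
  · rw [abs_of_nonpos (by linarith [clmp_le_clmp (lo := lo) (hi := hi) (c := c) h]),
      abs_of_nonpos (by linarith)]
    linarith [clmp_sub_le (lo := lo) (hi := hi) (c := c) h]

lemma clmp_decomp {lo hi c a b : ℝ} :
    |a - b| = |clmp lo hi c a - clmp lo hi c b| + |(a - clmp lo hi c a) - (b - clmp lo hi c b)| := by
  rcases le_total b a with h | h
  · have h1 := clmp_le_clmp (lo := lo) (hi := hi) (c := c) h
    have h2 := clmp_sub_le (lo := lo) (hi := hi) (c := c) h
    rw [abs_of_nonneg (by linarith), abs_of_nonneg (by linarith), abs_of_nonneg (by linarith)]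
    ring
  · have h1 := clmp_le_clmp (lo := lo) (hi := hi) (c := c) h
    have h2 := clmp_sub_le (lo := lo) (hi := hi) (c := c) h
    rw [abs_of_nonpos (by linarith), abs_of_nonpos (by linarith), abs_of_nonpos (by linarith)]
    ring

lemma clmp_mem {lo hi c : ℝ} (hlohi : lo ≤ hi) (t : ℝ) :
    lo ≤ clmp lo hi c t ∧ clmp lo hi c t ≤ hi := by
  unfold clmp
  constructor
  · exact le_min hlohi (le_max_right _ _)
  · exact min_le_left _ _

lemma clmp_of_mem {lo hi c t : ℝ} (h1 : lo ≤ t - c) (h2 : t - c ≤ hi) :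
    clmp lo hi c t = t - c := by
  unfold clmp
  rw [max_eq_left h1, min_eq_right h2]

/-- the key algebraic inequality for the competitor. -/
lemma key_alg {ε : ℝ} (hε : 0 < ε) (c a b p q : ℝ) :
    ε * (|ε⁻¹ * clmp 0 ε c a - ε⁻¹ * clmp 0 ε c b| - |p - q|) ≤
      |a - b| - |(a + ε * (p - ε⁻¹ * clmp 0 ε c a)) - (b + ε * (q - ε⁻¹ * clmp 0 ε c b))| := by
  set Ta := clmp 0 ε c a
  set Tb := clmp 0 ε c b
  have hne : ε ≠ 0 := ne_of_gt hε
  have h1 : |ε⁻¹ * Ta - ε⁻¹ * Tb| = ε⁻¹ * |Ta - Tb| := by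
    rw [← mul_sub, abs_mul, abs_of_nonneg (by positivity)]
  have hdecomp : |a - b| = |Ta - Tb| + |(a - Ta) - (b - Tb)| := clmp_decomp
  have harg : (a + ε * (p - ε⁻¹ * Ta)) - (b + ε * (q - ε⁻¹ * Tb))
      = ε * (p - q) + ((a - Ta) - (b - Tb)) := by
    field_simp
    ring
  rw [h1, harg, hdecomp]
  have htri : |ε * (p - q) + ((a - Ta) - (b - Tb))| ≤ ε * |p - q| + |(a - Ta) - (b - Tb)| := by
    calc _ ≤ |ε * (p - q)| + |(a - Ta) - (b - Tb)| := abs_add_le _ _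
    _ = _ := by rw [abs_mul, abs_of_nonneg hε.le]
  have : ε * (ε⁻¹ * |Ta - Tb|) = |Ta - Tb| := by field_simp
  nlinarith [abs_nonneg ((a - Ta) - (b - Tb))]

lemma exists_shell {δ t : ℝ} (hδ : 0 < δ) (ht : δ ≤ t) :
    ∃ j : ℕ, δ * 2 ^ j ≤ t ∧ t < δ * 2 ^ (j + 1) := by
  classical
  have hex : ∃ j : ℕ, t < δ * 2 ^ (j + 1) := by
    obtain ⟨j, hj⟩ := pow_unbounded_of_one_lt (t / δ) (by norm_num : (1:ℝ) < 2)
    refine ⟨j, ?_⟩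
    have h1 := (div_lt_iff₀ hδ).mp hj
    have h2 : δ * 2 ^ j ≤ δ * 2 ^ (j+1) := by
      have : (2:ℝ)^j ≤ 2^(j+1) := pow_le_pow_right₀ (by norm_num) (by omega)
      nlinarith
    nlinarith
  let j₀ := Nat.find hex
  refine ⟨j₀, ?_, Nat.find_spec hex⟩
  rcases Nat.eq_zero_or_pos j₀ with h0 | hpos
  · simpa [h0] using ht
  · have h := Nat.find_min hex (m := j₀ - 1) (Nat.sub_lt hpos one_pos)
    push_neg at h
    have he : j₀ - 1 + 1 = j₀ := Nat.succ_pred_eq_of_pos hpos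
    rw [← he]
    exact h

lemma rpow_neg_anti {a b p : ℝ} (ha : 0 < a) (hab : a ≤ b) (hp : 0 ≤ p) :
    b ^ (-p) ≤ a ^ (-p) := by
  have hb : 0 < b := lt_of_lt_of_le ha hab
  rw [Real.rpow_neg hb.le, Real.rpow_neg ha.le]
  exact inv_anti₀ (Real.rpow_pos_of_pos ha p) (Real.rpow_le_rpow ha.le hab hp)

lemma shell_term (n : ℕ) {s δ : ℝ} (hs0 : 0 < s) (hδ : 0 < δ) (j : ℕ) :
    (δ * 2 ^ j) ^ (-((n:ℝ) + s)) * (δ * 2 ^ (j+1)) ^ (n:ℕ)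
      = 2 ^ (n:ℕ) * δ ^ (-s) * ((2:ℝ) ^ (-s)) ^ j := by
  have h2j : (0:ℝ) < 2 ^ j := by positivity
  have e1 : (δ * 2 ^ j) ^ (-((n:ℝ) + s)) = δ ^ (-((n:ℝ)+s)) * ((2:ℝ) ^ j) ^ (-((n:ℝ)+s)) :=
    Real.mul_rpow hδ.le (by positivity)
  have e2 : ((2:ℝ) ^ j) ^ (-((n:ℝ)+s)) = (2:ℝ) ^ ((j:ℝ) * (-((n:ℝ)+s))) := by
    rw [← Real.rpow_natCast 2 j, ← Real.rpow_mul (by norm_num)]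
  have e3 : (δ * 2 ^ (j+1)) ^ (n:ℕ) = δ ^ (n:ℝ) * (2:ℝ) ^ (((j:ℝ)+1) * (n:ℝ)) := by
    rw [mul_pow, ← Real.rpow_natCast δ n, ← Real.rpow_natCast ((2:ℝ)^(j+1)) n,
      ← Real.rpow_natCast 2 (j+1), ← Real.rpow_mul (by norm_num)]
    push_cast
    ring_nf
  have e4 : ((2:ℝ) ^ (-s)) ^ j = (2:ℝ) ^ (-s * (j:ℝ)) := by
    rw [← Real.rpow_natCast ((2:ℝ)^(-s)) j, ← Real.rpow_mul (by norm_num)]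
  have e5 : δ ^ (-((n:ℝ)+s)) * δ ^ (n:ℝ) = δ ^ (-s) := by
    rw [← Real.rpow_add hδ]; ring_nf
  have e6 : (2:ℝ) ^ ((j:ℝ) * (-((n:ℝ)+s))) * (2:ℝ) ^ (((j:ℝ)+1) * (n:ℝ))
      = (2:ℝ) ^ (n:ℝ) * (2:ℝ) ^ (-s * (j:ℝ)) := by
    rw [← Real.rpow_add (by norm_num), ← Real.rpow_add (by norm_num)]
    ring_nf
  have e7 : (2:ℝ) ^ (n:ℕ) = (2:ℝ) ^ (n:ℝ) := (Real.rpow_natCast 2 n).symm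
  rw [e1, e2, e3, e4, e7]
  calc δ ^ (-((n:ℝ)+s)) * (2:ℝ) ^ ((j:ℝ) * (-((n:ℝ)+s))) * (δ ^ (n:ℝ) * (2:ℝ) ^ (((j:ℝ)+1) * (n:ℝ)))
      = (δ ^ (-((n:ℝ)+s)) * δ ^ (n:ℝ)) * ((2:ℝ) ^ ((j:ℝ) * (-((n:ℝ)+s))) * (2:ℝ) ^ (((j:ℝ)+1) * (n:ℝ))) := by ring
    _ = δ ^ (-s) * ((2:ℝ) ^ (n:ℝ) * (2:ℝ) ^ (-s * (j:ℝ))) := by rw [e5, e6]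
    _ = (2:ℝ) ^ (n:ℝ) * δ ^ (-s) * (2:ℝ) ^ (-s * (j:ℝ)) := by ring

/-- Tail estimate. -/
lemma lemA (n : ℕ) (s : ℝ) (hs0 : 0 < s) (Ω : Set (Rn n)) :
    ∃ C : ℝ≥0∞, C ≠ ⊤ ∧ ∀ x : Rn n, 0 < infDist x Ωᶜ →
      ∫⁻ y in Ωᶜ, ENNReal.ofReal (1 / dist x y ^ ((n : ℝ) + s)) ≤
        C * ENNReal.ofReal ((infDist x Ωᶜ) ^ (-s)) := by
  set r : ℝ := (n : ℝ) + s with hrdef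
  have hr0 : 0 ≤ r := by positivity
  set Vn : ℝ≥0∞ := volume (ball (0 : Rn n) 1) with hVn
  have hVfin : Vn ≠ ⊤ := (isBounded_ball.measure_lt_top).ne
  set q : ℝ≥0∞ := ENNReal.ofReal ((2:ℝ) ^ (-s)) with hq
  have hqlt : q < 1 := by
    rw [hq, ← ENNReal.ofReal_one]
    exact (ENNReal.ofReal_lt_ofReal_iff_of_nonneg (by positivity)).mpr
      (Real.rpow_lt_one_of_one_lt_of_neg (by norm_num) (by linarith))
  refine ⟨ENNReal.ofReal ((2:ℝ) ^ (n:ℕ)) * Vn * (1 - q)⁻¹, ?_, ?_⟩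
  · refine ENNReal.mul_ne_top (ENNReal.mul_ne_top ENNReal.ofReal_ne_top hVfin) ?_
    rw [ENNReal.inv_ne_top]
    intro h0
    exact absurd (tsub_eq_zero_iff_le.mp h0) (not_le.mpr hqlt)
  · intro x hδ
    set δ : ℝ := infDist x Ωᶜ with hδdef
    set Sh : ℕ → Set (Rn n) := fun j => {y | δ * 2 ^ j ≤ dist x y ∧ dist x y < δ * 2 ^ (j+1)}
      with hSh
    have hsub : Ωᶜ ⊆ ⋃ j, Sh j := by
      intro y hy
      obtain ⟨j, hj1, hj2⟩ := exists_shell hδ (infDist_le_dist_of_mem hy)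
      exact mem_iUnion.mpr ⟨j, hj1, hj2⟩
    calc ∫⁻ y in Ωᶜ, ENNReal.ofReal (1 / dist x y ^ r)
        ≤ ∫⁻ y in ⋃ j, Sh j, ENNReal.ofReal (1 / dist x y ^ r) :=
          lintegral_mono' (Measure.restrict_mono hsub le_rfl) le_rfl
      _ ≤ ∑' j, ∫⁻ y in Sh j, ENNReal.ofReal (1 / dist x y ^ r) := lintegral_iUnion_le _ _
      _ ≤ ∑' j, ENNReal.ofReal ((2:ℝ)^(n:ℕ)) * ENNReal.ofReal (δ ^ (-s)) * Vn * q ^ j := by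
          refine ENNReal.tsum_le_tsum fun j => ?_
          have hδ2 : (0:ℝ) < δ * 2 ^ j := by positivity
          have hstep : ∀ y ∈ Sh j, ENNReal.ofReal (1 / dist x y ^ r)
              ≤ ENNReal.ofReal ((δ * 2 ^ j) ^ (-r)) := by
            intro y hy
            apply ENNReal.ofReal_le_ofReal
            rw [one_div, ← Real.rpow_neg dist_nonneg]
            exact rpow_neg_anti hδ2 hy.1 hr0
          calc ∫⁻ y in Sh j, ENNReal.ofReal (1 / dist x y ^ r)
              ≤ ∫⁻ _ in Sh j, ENNReal.ofReal ((δ * 2 ^ j) ^ (-r)) := by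
                apply setLIntegral_mono' ?_ hstep
                · have : Sh j = (fun y => dist x y) ⁻¹' (Ico (δ * 2^j) (δ * 2^(j+1))) := rfl
                  rw [this]
                  exact (Continuous.dist continuous_const continuous_id).measurable
                    measurableSet_Ico
            _ = ENNReal.ofReal ((δ * 2 ^ j) ^ (-r)) * volume (Sh j) := by
                rw [setLIntegral_const]
            _ ≤ ENNReal.ofReal ((δ * 2 ^ j) ^ (-r)) * volume (ball x (δ * 2 ^ (j+1))) := by
                gcongr
                intro y hy
                rw [mem_ball']
                exact hy.2
            _ = ENNReal.ofReal ((δ * 2 ^ j) ^ (-r)) *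
                  (ENNReal.ofReal ((δ * 2 ^ (j+1)) ^ (Module.finrank ℝ (Rn n))) * Vn) := by
                rw [Measure.addHaar_ball_of_pos _ _ (by positivity)]
            _ = ENNReal.ofReal ((2:ℝ)^(n:ℕ)) * ENNReal.ofReal (δ ^ (-s)) * Vn * q ^ j := by
                rw [finrank_euclideanSpace_fin, ← mul_assoc, ← ENNReal.ofReal_mul (by positivity),
                  shell_term n hs0 hδ j, hq, ← ENNReal.ofReal_pow (by positivity),
                  ENNReal.ofReal_mul (by positivity), ENNReal.ofReal_mul (by positivity)]
                ring
      _ = ENNReal.ofReal ((2:ℝ)^(n:ℕ)) * Vn * (1-q)⁻¹ * ENNReal.ofReal (δ ^ (-s)) := by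
          rw [ENNReal.tsum_mul_left, ENNReal.tsum_geometric]
          ring

lemma exists_dyadic {C t : ℝ} (h0 : 0 < t) (hle : t ≤ C) :
    ∃ j : ℕ, C * (2⁻¹ : ℝ) ^ (j + 1) < t ∧ t ≤ C * (2⁻¹) ^ j := by
  classical
  have hC : 0 < C := lt_of_lt_of_le h0 hle
  have hex : ∃ j : ℕ, C * (2⁻¹ : ℝ) ^ (j + 1) < t := by
    obtain ⟨j, hj⟩ := exists_pow_lt_of_lt_one (x := t / C) (by positivity)
      (by norm_num : (2⁻¹:ℝ) < 1)
    refine ⟨j, ?_⟩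
    have h1 : (2⁻¹:ℝ)^j * C < t := (lt_div_iff₀ hC).mp hj
    have h2 : C * (2⁻¹:ℝ)^(j+1) ≤ C * (2⁻¹)^j := by
      have : (2⁻¹:ℝ)^(j+1) ≤ (2⁻¹)^j := by
        apply pow_le_pow_of_le_one (by norm_num) (by norm_num) (by omega)
      nlinarith
    linarith
  let j₀ := Nat.find hex
  have hpos : _ := Nat.find_spec hex
  refine ⟨j₀, hpos, ?_⟩
  rcases Nat.eq_zero_or_pos j₀ with h0' | hpos'
  · simpa [h0'] using hle
  · have h := Nat.find_min hex (m := j₀ - 1) (Nat.sub_lt hpos' one_pos)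
    push_neg at h
    have he : j₀ - 1 + 1 = j₀ := Nat.succ_pred_eq_of_pos hpos'
    rw [← he]
    exact h

lemma slab_vol {n : ℕ} {Δ : Rn n → ℝ} (hΔc : Continuous Δ) {ν : Rn n}
    (htrans : ∀ (y : Rn n) (c : ℝ), Δ (y + c • ν) = Δ y + c) (hνn : ‖ν‖ = 1)
    (z : Rn n) (R a h : ℝ) (hh : 0 < h) :
    volume {y | y ∈ ball z R ∧ (a < Δ y ∧ Δ y ≤ a + h)} ≤
      ENNReal.ofReal (2 * h) * volume (ball z (R + 1)) := by
  set T := {y | y ∈ ball z R ∧ (a < Δ y ∧ Δ y ≤ a + h)} with hT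
  set W := volume (ball z (R + 1)) with hW
  have hTm : MeasurableSet T :=
    measurableSet_ball.inter ((measurableSet_lt measurable_const hΔc.measurable).inter
      (measurableSet_le hΔc.measurable measurable_const))
  -- main translation claim
  have claim : ∀ m : ℕ, (m : ℝ) * h ≤ 1 → (m : ℝ≥0∞) * volume T ≤ W := by
    intro m hmh
    set S : ℕ → Set (Rn n) := fun k => (fun y => y + (-((k:ℝ) * h)) • ν) ⁻¹' T with hS
    have hSm : ∀ k, MeasurableSet (S k) := fun k =>
      (measurable_id.add_const _) hTm
    have hSvol : ∀ k, volume (S k) = volume T := fun k =>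
      measure_preimage_add_right volume _ T
    have hSΔ : ∀ k (y : Rn n), y ∈ S k → a + k * h < Δ y ∧ Δ y ≤ a + (k + 1) * h := by
      intro k y hy
      have h1 : Δ (y + (-((k:ℝ) * h)) • ν) = Δ y - k * h := by
        rw [htrans]; ring
      obtain ⟨_, h2, h3⟩ := hy
      constructor <;> [linarith [h1 ▸ h2]; nlinarith [h1 ▸ h3]]
    have hSball : ∀ k < m, S k ⊆ ball z (R + 1) := by
      intro k hk y hy
      have hmem : y + (-((k:ℝ) * h)) • ν ∈ ball z R := hy.1
      have hkh : (k:ℝ) * h ≤ 1 := by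
        have : (k:ℝ) ≤ m := by exact_mod_cast hk.le
        nlinarith
      have : dist y z ≤ dist (y + (-((k:ℝ) * h)) • ν) z + (k:ℝ) * h := by
        have hd : dist y (y + (-((k:ℝ) * h)) • ν) = (k:ℝ) * h := by
          rw [dist_eq_norm,
            show y - (y + (-((k:ℝ) * h)) • ν) = ((k:ℝ)*h) • ν by rw [neg_smul]; abel,
            norm_smul, hνn]
          rw [mul_one, Real.norm_eq_abs, abs_of_nonneg (mul_nonneg (Nat.cast_nonneg k) hh.le)]
        calc dist y z ≤ dist y (y + (-((k:ℝ) * h)) • ν) + dist (y + (-((k:ℝ) * h)) • ν) z :=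
              dist_triangle _ _ _
          _ = dist (y + (-((k:ℝ) * h)) • ν) z + (k:ℝ) * h := by rw [hd]; ring
      have := mem_ball.mp hmem
      rw [mem_ball]
      linarith
    have key : ∀ i j : ℕ, i < j → Disjoint (S i) (S j) := by
      intro i j hlt
      apply Set.disjoint_left.mpr
      intro y hyi hyj
      have h1 := (hSΔ i y hyi).2
      have h2 := (hSΔ j y hyj).1
      have hij' : (i:ℝ) + 1 ≤ (j:ℝ) := by exact_mod_cast hlt
      nlinarith
    have hdisj : (↑(Finset.range m) : Set ℕ).PairwiseDisjoint S := by
      intro i _ j _ hij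
      rcases lt_or_gt_of_ne hij with hlt | hlt
      · exact key i j hlt
      · exact (key j i hlt).symm
    calc (m : ℝ≥0∞) * volume T = ∑ k ∈ Finset.range m, volume (S k) := by
          simp [hSvol, Finset.sum_const]
      _ = volume (⋃ k ∈ Finset.range m, S k) :=
          (measure_biUnion_finset hdisj (fun k _ => hSm k)).symm
      _ ≤ W := measure_mono (by
          intro y hy
          simp only [mem_iUnion, Finset.mem_range] at hy
          obtain ⟨k, hk, hyk⟩ := hy
          exact hSball k hk hyk)
  rcases le_or_gt h 2⁻¹ with hh2 | hh2
  · set m := ⌊(1:ℝ)/h⌋₊ with hm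
    have hm2 : (2:ℝ) ≤ 1/h := by
      rw [le_div_iff₀ hh]; linarith
    have hmh : (m:ℝ) * h ≤ 1 := by
      have := Nat.floor_le (by positivity : (0:ℝ) ≤ 1/h)
      calc (m:ℝ) * h ≤ (1/h) * h := by nlinarith
        _ = 1 := by field_simp
    have hlow : 1/(2*h) ≤ (m:ℝ) := by
      have h1 := Nat.lt_floor_add_one ((1:ℝ)/h)
      have hx : 1/(2*h) = 1/h/2 := by rw [div_div, mul_comm]
      have : (1:ℝ)/h/2 ≤ 1/h - 1 := by linarith
      rw [hx]
      linarith
    have key := claim m hmh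
    have step : ENNReal.ofReal (1/(2*h)) * volume T ≤ W := by
      refine le_trans (mul_le_mul_left ?_ _) key
      calc ENNReal.ofReal (1/(2*h)) ≤ ENNReal.ofReal (m:ℝ) := ENNReal.ofReal_le_ofReal hlow
        _ = (m : ℝ≥0∞) := ENNReal.ofReal_natCast m
    have hone : ENNReal.ofReal (2*h) * ENNReal.ofReal (1/(2*h)) = 1 := by
      rw [← ENNReal.ofReal_mul (by positivity),
        show (2*h) * (1/(2*h)) = 1 by field_simp]
      exact ENNReal.ofReal_one
    calc volume T = ENNReal.ofReal (2*h) * ENNReal.ofReal (1/(2*h)) * volume T := by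
          rw [hone, one_mul]
      _ = ENNReal.ofReal (2*h) * (ENNReal.ofReal (1/(2*h)) * volume T) := mul_assoc _ _ _
      _ ≤ ENNReal.ofReal (2*h) * W := mul_le_mul_right step _
  · calc volume T ≤ volume (ball z (R+1)) := measure_mono (fun y hy =>
          ball_subset_ball (by linarith) hy.1)
      _ ≤ ENNReal.ofReal (2*h) * W := by
          rw [hW]
          apply le_mul_of_one_le_left (by positivity)
          rw [← ENNReal.ofReal_one]
          exact ENNReal.ofReal_le_ofReal (by linarith)

-- projection bound
lemma proj_bound {n : ℕ} {ν : Rn n} (hν : ‖ν‖ = 1) (w : Rn n) :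
    ‖w - (inner ℝ w ν : ℝ) • ν‖ ≤ ‖w‖ := by
  set c : ℝ := (inner ℝ w ν : ℝ) with hc
  have h1 : ‖w - c • ν‖^2 = ‖w‖^2 - 2*(inner ℝ w (c • ν) : ℝ) + ‖c • ν‖^2 := by
    rw [@norm_sub_sq_real]
  have h2 : (inner ℝ w (c • ν) : ℝ) = c * c := by
    rw [real_inner_smul_right]
  have h3 : ‖c • ν‖^2 = c * c := by
    rw [norm_smul, hν, mul_one, Real.norm_eq_abs, ← abs_mul_abs_self c]
    ring
  have h4 : ‖w - c • ν‖^2 ≤ ‖w‖^2 := by rw [h1, h2, h3]; nlinarith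
  nlinarith [norm_nonneg (w - c • ν), norm_nonneg w]

lemma dyadic_term {C₀ s : ℝ} (hC : 0 < C₀) (hs0 : 0 < s) (j : ℕ) :
    (C₀*(2⁻¹:ℝ)^(j+1))^(-s) * (2*(C₀*(2⁻¹:ℝ)^(j+1)))
      = (2*C₀^(1-s)) * ((2⁻¹:ℝ)^(1-s))^(j+1) := by
  set x : ℝ := C₀*(2⁻¹:ℝ)^(j+1) with hx
  have hxpos : 0 < x := by positivity
  have h1 : x^(-s) * (2*x) = 2 * x^(1-s) := by
    rw [show x^(1-s) = x^(-s) * x by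
      rw [show (1:ℝ)-s = -s + 1 by ring, Real.rpow_add hxpos, Real.rpow_one]]
    ring
  rw [h1, hx]
  have h2 : (C₀*(2⁻¹:ℝ)^(j+1))^(1-s) = C₀^(1-s) * ((2⁻¹:ℝ)^(j+1))^(1-s) :=
    Real.mul_rpow hC.le (by positivity)
  have h3 : ((2⁻¹:ℝ)^(j+1))^(1-s) = ((2⁻¹:ℝ)^(1-s))^(j+1) := by
    rw [← Real.rpow_natCast (2⁻¹:ℝ) (j+1), ← Real.rpow_mul (by norm_num),
      ← Real.rpow_natCast ((2⁻¹:ℝ)^(1-s)) (j+1), ← Real.rpow_mul (by norm_num), mul_comm]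
  rw [h2, h3]
  ring

/-- Per-ball estimate for the boundary integral. -/
lemma perBall {n : ℕ} {s : ℝ} (hs0 : 0 < s) (hs1 : s < 1) {Ω : Set (Rn n)} (hΩo : IsOpen Ω)
    (hne : Ωᶜ.Nonempty) {z : Rn n} (hz : z ∉ Ω) {r : ℝ} (hr : 0 < r) {ν : Rn n} (hν : ‖ν‖ = 1)
    {L : NNReal} {ψ : Rn n → ℝ} (hψ : LipschitzWith L ψ)
    (hgraph : Ω ∩ ball z r = {y ∈ ball z r | ψ (y - (inner ℝ y ν : ℝ) • ν) < (inner ℝ y ν : ℝ)}) :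
    ∫⁻ y in Ω ∩ ball z (r/2), ENNReal.ofReal ((infDist y Ωᶜ) ^ (-s)) < ⊤ := by
  set Δ : Rn n → ℝ := fun y => (inner ℝ y ν : ℝ) - ψ (y - (inner ℝ y ν : ℝ) • ν) with hΔ
  have hinner : Continuous fun y : Rn n => (inner ℝ y ν : ℝ) :=
    continuous_id.inner continuous_const
  have hΔc : Continuous Δ :=
    hinner.sub (hψ.continuous.comp (continuous_id.sub (hinner.smul continuous_const)))
  have hνν : (inner ℝ ν ν : ℝ) = 1 := by
    rw [real_inner_self_eq_norm_mul_norm, hν, mul_one]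
  have htrans : ∀ (y : Rn n) (c : ℝ), Δ (y + c • ν) = Δ y + c := by
    intro y c
    have h1 : (inner ℝ (y + c • ν) ν : ℝ) = (inner ℝ y ν : ℝ) + c := by
      rw [inner_add_left, real_inner_smul_left, hνν, mul_one]
    have h2 : (y + c • ν) - ((inner ℝ y ν : ℝ) + c) • ν = y - (inner ℝ y ν : ℝ) • ν := by
      rw [add_smul]; abel
    simp only [hΔ, h1, h2]; ring
  have hLip : ∀ y₁ y₂ : Rn n, Δ y₁ - Δ y₂ ≤ (1 + (L:ℝ)) * ‖y₁ - y₂‖ := by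
    intro y₁ y₂
    have hinn : (inner ℝ y₁ ν : ℝ) - (inner ℝ y₂ ν : ℝ) = (inner ℝ (y₁ - y₂) ν : ℝ) := by
      rw [inner_sub_left]
    have habs : (inner ℝ (y₁ - y₂) ν : ℝ) ≤ ‖y₁ - y₂‖ := by
      calc (inner ℝ (y₁ - y₂) ν : ℝ) ≤ ‖y₁ - y₂‖ * ‖ν‖ := real_inner_le_norm _ _
        _ = ‖y₁ - y₂‖ := by rw [hν, mul_one]
    have hproj : ‖(y₁ - (inner ℝ y₁ ν : ℝ) • ν) - (y₂ - (inner ℝ y₂ ν : ℝ) • ν)‖ ≤ ‖y₁ - y₂‖ := by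
      have : (y₁ - (inner ℝ y₁ ν : ℝ) • ν) - (y₂ - (inner ℝ y₂ ν : ℝ) • ν)
          = (y₁ - y₂) - (inner ℝ (y₁ - y₂) ν : ℝ) • ν := by
        rw [inner_sub_left, sub_smul]; abel
      rw [this]
      exact proj_bound hν _
    have hψd : ψ (y₂ - (inner ℝ y₂ ν : ℝ) • ν) - ψ (y₁ - (inner ℝ y₁ ν : ℝ) • ν)
        ≤ (L:ℝ) * ‖y₁ - y₂‖ := by
      have := hψ.dist_le_mul (y₂ - (inner ℝ y₂ ν : ℝ) • ν) (y₁ - (inner ℝ y₁ ν : ℝ) • ν)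
      rw [Real.dist_eq] at this
      calc ψ (y₂ - (inner ℝ y₂ ν : ℝ) • ν) - ψ (y₁ - (inner ℝ y₁ ν : ℝ) • ν)
          ≤ |ψ (y₂ - (inner ℝ y₂ ν : ℝ) • ν) - ψ (y₁ - (inner ℝ y₁ ν : ℝ) • ν)| := le_abs_self _
        _ ≤ (L:ℝ) * dist (y₂ - (inner ℝ y₂ ν : ℝ) • ν) (y₁ - (inner ℝ y₁ ν : ℝ) • ν) := this
        _ ≤ (L:ℝ) * ‖y₁ - y₂‖ := by
            rw [dist_eq_norm, norm_sub_rev]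
            exact mul_le_mul_of_nonneg_left hproj (NNReal.coe_nonneg L)
    calc Δ y₁ - Δ y₂ = ((inner ℝ (y₁ - y₂) ν : ℝ))
          + (ψ (y₂ - (inner ℝ y₂ ν : ℝ) • ν) - ψ (y₁ - (inner ℝ y₁ ν : ℝ) • ν)) := by
          simp only [hΔ]; rw [← hinn]; ring
      _ ≤ ‖y₁ - y₂‖ + (L:ℝ) * ‖y₁ - y₂‖ := add_le_add habs hψd
      _ = (1 + (L:ℝ)) * ‖y₁ - y₂‖ := by ring
  have h1L : (0:ℝ) < 1 + (L:ℝ) := by positivity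
  have hpos : ∀ y ∈ Ω ∩ ball z (r/2), 0 < Δ y := by
    intro y hy
    have hyr : y ∈ Ω ∩ ball z r := ⟨hy.1, ball_subset_ball (by linarith) hy.2⟩
    rw [hgraph] at hyr
    simpa [hΔ, sub_pos] using hyr.2
  have hΔz : Δ z ≤ 0 := by
    by_contra hcon
    push_neg at hcon
    have hzb : z ∈ ball z r := mem_ball_self hr
    have : z ∈ Ω ∩ ball z r := by
      rw [hgraph]
      exact ⟨hzb, by simpa [hΔ, sub_pos] using hcon⟩
    exact hz this.1
  set C₀ : ℝ := (1 + (L:ℝ)) * (r/2) with hC₀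
  have hC₀pos : 0 < C₀ := by positivity
  have hub : ∀ y ∈ ball z (r/2), Δ y ≤ C₀ := by
    intro y hy
    have h1 : Δ y - Δ z ≤ (1 + (L:ℝ)) * ‖y - z‖ := hLip y z
    have h2 : ‖y - z‖ ≤ r/2 := by
      rw [← dist_eq_norm]
      exact (mem_ball.mp hy).le
    nlinarith
  have hδlow : ∀ y ∈ Ω ∩ ball z (r/2), min (r/2) (Δ y * (1 + (L:ℝ))⁻¹) ≤ infDist y Ωᶜ := by
    intro y hy
    set m : ℝ := min (r/2) (Δ y * (1 + (L:ℝ))⁻¹) with hm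
    have hΔy := hpos y hy
    have hmpos : 0 < m := lt_min (by linarith) (by positivity)
    have hballs : ball y m ⊆ Ω := by
      intro ζ hζ
      have hd : dist ζ y < m := mem_ball.mp hζ
      have hζr : ζ ∈ ball z r := by
        rw [mem_ball]
        have := mem_ball.mp hy.2
        have hm1 : m ≤ r/2 := min_le_left _ _
        calc dist ζ z ≤ dist ζ y + dist y z := dist_triangle _ _ _
          _ < r := by linarith
      have hΔζ : 0 < Δ ζ := by
        have h1 : Δ y - Δ ζ ≤ (1 + (L:ℝ)) * ‖y - ζ‖ := hLip y ζ
        have h2 : ‖y - ζ‖ < m := by rw [← dist_eq_norm, dist_comm]; exact hd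
        have hm2 : (1 + (L:ℝ)) * m ≤ Δ y := by
          have := min_le_right (r/2) (Δ y * (1 + (L:ℝ))⁻¹)
          calc (1 + (L:ℝ)) * m ≤ (1 + (L:ℝ)) * (Δ y * (1 + (L:ℝ))⁻¹) := by
                exact mul_le_mul_of_nonneg_left this h1L.le
            _ = Δ y := by field_simp
        nlinarith
      have : ζ ∈ Ω ∩ ball z r := by
        rw [hgraph]
        exact ⟨hζr, by simpa [hΔ, sub_pos] using hΔζ⟩
      exact this.1
    by_contra hcon
    push_neg at hcon
    obtain ⟨q, hq, hqd⟩ := (infDist_lt_iff hne).mp (lt_of_lt_of_le hcon (le_refl _))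
    exact hq (hballs (mem_ball'.mpr hqd))
  -- split the integrand
  set E := Ω ∩ ball z (r/2) with hE
  have hEm : MeasurableSet E := hΩo.measurableSet.inter measurableSet_ball
  have hWfin : volume (ball z (r/2 + 1)) < ⊤ := isBounded_ball.measure_lt_top
  have hEfin : volume E < ⊤ :=
    lt_of_le_of_lt (measure_mono (inter_subset_right)) isBounded_ball.measure_lt_top
  have hptw : ∀ y ∈ E, ENNReal.ofReal ((infDist y Ωᶜ) ^ (-s))
      ≤ ENNReal.ofReal ((r/2) ^ (-s)) + ENNReal.ofReal ((1+(L:ℝ))^s) * ENNReal.ofReal ((Δ y) ^ (-s)) := by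
    intro y hy
    have hΔy := hpos y hy
    have hmin := hδlow y hy
    have hkey : (infDist y Ωᶜ) ^ (-s) ≤ (r/2) ^ (-s) + (1+(L:ℝ))^s * (Δ y) ^ (-s) := by
      rcases min_cases (r/2) (Δ y * (1 + (L:ℝ))⁻¹) with ⟨hmeq, _⟩ | ⟨hmeq, _⟩
      · have h1 : (infDist y Ωᶜ) ^ (-s) ≤ (r/2) ^ (-s) :=
          rpow_neg_anti (by linarith) (by rw [hmeq] at hmin; exact hmin) hs0.le
        have h2 : 0 ≤ (1+(L:ℝ))^s * (Δ y) ^ (-s) := by positivity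
        linarith
      · have hbpos : 0 < Δ y * (1 + (L:ℝ))⁻¹ := by positivity
        have h1 : (infDist y Ωᶜ) ^ (-s) ≤ (Δ y * (1 + (L:ℝ))⁻¹) ^ (-s) :=
          rpow_neg_anti hbpos (by rw [hmeq] at hmin; exact hmin) hs0.le
        have h2 : (Δ y * (1 + (L:ℝ))⁻¹) ^ (-s) = (1+(L:ℝ))^s * (Δ y) ^ (-s) := by
          rw [Real.mul_rpow hΔy.le (by positivity), Real.inv_rpow h1L.le,
            Real.rpow_neg h1L.le, inv_inv]
          ring
        have h3 : (0:ℝ) ≤ (r/2) ^ (-s) := by positivity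
        rw [h2] at h1
        linarith
    calc ENNReal.ofReal ((infDist y Ωᶜ) ^ (-s))
        ≤ ENNReal.ofReal ((r/2) ^ (-s) + (1+(L:ℝ))^s * (Δ y) ^ (-s)) :=
          ENNReal.ofReal_le_ofReal hkey
      _ ≤ _ := by
          rw [ENNReal.ofReal_add (by positivity) (by positivity),
            ENNReal.ofReal_mul (by positivity)]
  -- the dyadic estimate for ∫ Δ^(-s)
  have hdyadic : ∫⁻ y in E, ENNReal.ofReal ((Δ y) ^ (-s)) < ⊤ := by
    set T : ℕ → Set (Rn n) := fun j =>
      {y | y ∈ ball z (r/2) ∧ (C₀*(2⁻¹:ℝ)^(j+1) < Δ y ∧ Δ y ≤ C₀*(2⁻¹:ℝ)^(j+1) + C₀*(2⁻¹:ℝ)^(j+1))}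
      with hTdef
    have hTm : ∀ j, MeasurableSet (T j) := fun j =>
      measurableSet_ball.inter ((measurableSet_lt measurable_const hΔc.measurable).inter
        (measurableSet_le hΔc.measurable measurable_const))
    have hsum2 : ∀ j : ℕ, C₀*(2⁻¹:ℝ)^(j+1) + C₀*(2⁻¹:ℝ)^(j+1) = C₀*(2⁻¹:ℝ)^j := by
      intro j
      rw [pow_succ]
      ring
    have hsubT : E ⊆ ⋃ j, T j := by
      intro y hy
      obtain ⟨j, hj1, hj2⟩ := exists_dyadic (hpos y hy) (hub y hy.2)
      exact mem_iUnion.mpr ⟨j, hy.2, hj1, by rw [hsum2]; exact hj2⟩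
    set q : ℝ := (2⁻¹:ℝ)^(1-s) with hq
    have hq1 : q < 1 := Real.rpow_lt_one (by norm_num) (by norm_num) (by linarith)
    have hq0 : 0 < q := Real.rpow_pos_of_pos (by norm_num) _
    have hqlt : ENNReal.ofReal q < 1 := by
      rw [← ENNReal.ofReal_one]
      exact (ENNReal.ofReal_lt_ofReal_iff_of_nonneg hq0.le).mpr hq1
    calc ∫⁻ y in E, ENNReal.ofReal ((Δ y) ^ (-s))
        ≤ ∫⁻ y in ⋃ j, T j, ENNReal.ofReal ((Δ y) ^ (-s)) :=
          lintegral_mono' (Measure.restrict_mono hsubT le_rfl) le_rfl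
      _ ≤ ∑' j, ∫⁻ y in T j, ENNReal.ofReal ((Δ y) ^ (-s)) := lintegral_iUnion_le _ _
      _ ≤ ∑' j, ENNReal.ofReal (2*C₀^(1-s)) * ENNReal.ofReal q ^ (j+1) *
            volume (ball z (r/2 + 1)) := by
          refine ENNReal.tsum_le_tsum fun j => ?_
          have hβpos : (0:ℝ) < C₀*(2⁻¹:ℝ)^(j+1) := by positivity
          calc ∫⁻ y in T j, ENNReal.ofReal ((Δ y) ^ (-s))
              ≤ ∫⁻ _ in T j, ENNReal.ofReal ((C₀*(2⁻¹:ℝ)^(j+1)) ^ (-s)) := by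
                refine setLIntegral_mono' (hTm j) fun y hy => ?_
                exact ENNReal.ofReal_le_ofReal (rpow_neg_anti hβpos hy.2.1.le hs0.le)
            _ = ENNReal.ofReal ((C₀*(2⁻¹:ℝ)^(j+1)) ^ (-s)) * volume (T j) := setLIntegral_const _ _
            _ ≤ ENNReal.ofReal ((C₀*(2⁻¹:ℝ)^(j+1)) ^ (-s)) *
                  (ENNReal.ofReal (2*(C₀*(2⁻¹:ℝ)^(j+1))) * volume (ball z (r/2 + 1))) := by
                gcongr
                exact slab_vol hΔc htrans hν z (r/2) (C₀*(2⁻¹:ℝ)^(j+1)) (C₀*(2⁻¹:ℝ)^(j+1))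
                  (by positivity)
            _ = ENNReal.ofReal (2*C₀^(1-s)) * ENNReal.ofReal q ^ (j+1) *
                  volume (ball z (r/2 + 1)) := by
                rw [← mul_assoc, ← ENNReal.ofReal_mul (by positivity), dyadic_term hC₀pos hs0,
                  hq, ← ENNReal.ofReal_pow (by positivity),
                  ENNReal.ofReal_mul (by positivity)]
      _ < ⊤ := by
          have : ∑' (j:ℕ), ENNReal.ofReal (2*C₀^(1-s)) * ENNReal.ofReal q ^ (j+1) *
              volume (ball z (r/2 + 1))
              = ENNReal.ofReal (2*C₀^(1-s)) * ENNReal.ofReal q * volume (ball z (r/2 + 1)) *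
                ∑' (j:ℕ), ENNReal.ofReal q ^ j := by
            rw [← ENNReal.tsum_mul_left]
            congr 1
            funext j
            rw [pow_succ]
            ring
          rw [this, ENNReal.tsum_geometric]
          refine ENNReal.mul_lt_top (ENNReal.mul_lt_top (ENNReal.mul_lt_top ?_ ?_) hWfin) ?_
          · exact ENNReal.ofReal_lt_top
          · exact ENNReal.ofReal_lt_top
          · exact ENNReal.inv_lt_top.mpr (tsub_pos_iff_lt.mpr hqlt)
  -- combine
  calc ∫⁻ y in E, ENNReal.ofReal ((infDist y Ωᶜ) ^ (-s))
      ≤ ∫⁻ y in E, (ENNReal.ofReal ((r/2) ^ (-s)) +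
          ENNReal.ofReal ((1+(L:ℝ))^s) * ENNReal.ofReal ((Δ y) ^ (-s))) :=
        setLIntegral_mono' hEm hptw
    _ = ENNReal.ofReal ((r/2) ^ (-s)) * volume E +
          ENNReal.ofReal ((1+(L:ℝ))^s) * ∫⁻ y in E, ENNReal.ofReal ((Δ y) ^ (-s)) := by
        rw [lintegral_add_left measurable_const, setLIntegral_const,
          lintegral_const_mul' _ _ ENNReal.ofReal_ne_top]
    _ < ⊤ := by
        refine ENNReal.add_lt_top.mpr ⟨?_, ?_⟩
        · exact ENNReal.mul_lt_top ENNReal.ofReal_lt_top hEfin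
        · exact ENNReal.mul_lt_top ENNReal.ofReal_lt_top hdyadic

/-- segment lemma: a nearby frontier point. -/
lemma seg_lemma {n : ℕ} {Ω : Set (Rn n)} (hΩo : IsOpen Ω) (hne : Ωᶜ.Nonempty)
    {x : Rn n} (hx : x ∈ Ω) {ρ : ℝ} (hρ : infDist x Ωᶜ < ρ) :
    ∃ w ∈ frontier Ω, dist x w < ρ := by
  obtain ⟨zc, hzc, hzcd⟩ := (infDist_lt_iff hne).mp hρ
  set f : ℝ → Rn n := fun θ => x + θ • (zc - x) with hf
  have hfc : Continuous f := continuous_const.add (continuous_id.smul continuous_const)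
  set S : Set ℝ := {θ | f θ ∈ Ωᶜ} ∩ Icc 0 1 with hS
  have hScl : IsClosed S := (hΩo.isClosed_compl.preimage hfc).inter isClosed_Icc
  have hSne : S.Nonempty := ⟨1, by
    refine ⟨?_, by norm_num⟩
    show f 1 ∈ Ωᶜ
    simpa [hf] using hzc⟩
  have hSbd : BddBelow S := ⟨0, fun θ hθ => hθ.2.1⟩
  set θ₀ : ℝ := sInf S with hθ₀
  have hθ₀S : θ₀ ∈ S := hScl.csInf_mem hSne hSbd
  have hθ₀0 : 0 ≤ θ₀ := hθ₀S.2.1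
  have hθ₀1 : θ₀ ≤ 1 := hθ₀S.2.2
  have hθpos : 0 < θ₀ := by
    rcases eq_or_lt_of_le hθ₀0 with h | h
    · exfalso
      apply hθ₀S.1
      rw [← h]
      simpa [hf] using hx
    · exact h
  have hfront : f θ₀ ∈ frontier Ω := by
    rw [hΩo.frontier_eq]
    refine ⟨?_, hθ₀S.1⟩
    have hseq : f '' Ico (0:ℝ) θ₀ ⊆ Ω := by
      rintro _ ⟨θ, hθ, rfl⟩
      by_contra hcon
      have : θ ∈ S := ⟨hcon, hθ.1, le_trans hθ.2.le hθ₀1⟩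
      exact absurd (csInf_le hSbd this) (not_le.mpr hθ.2)
    have hmem : θ₀ ∈ closure (Ico (0:ℝ) θ₀) := by
      rw [closure_Ico (ne_of_lt hθpos)]
      exact ⟨hθ₀0, le_refl _⟩
    have : f θ₀ ∈ f '' closure (Ico (0:ℝ) θ₀) := mem_image_of_mem f hmem
    have h2 : f θ₀ ∈ closure (f '' Ico (0:ℝ) θ₀) :=
      image_closure_subset_closure_image hfc this
    exact closure_mono hseq h2
  refine ⟨f θ₀, hfront, ?_⟩
  have hdist : dist x (f θ₀) = θ₀ * dist x zc := by
    rw [dist_eq_norm, show x - f θ₀ = -(θ₀ • (zc - x)) from by simp only [hf]; module,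
      norm_neg, norm_smul, Real.norm_eq_abs, abs_of_nonneg hθ₀0, norm_sub_rev,
      ← dist_eq_norm]
  rw [hdist]
  calc θ₀ * dist x zc ≤ 1 * dist x zc :=
        mul_le_mul_of_nonneg_right hθ₀1 dist_nonneg
    _ < ρ := by rw [one_mul]; exact hzcd

/-- The boundary-weight integrability for a bounded open Lipschitz set. -/
lemma lemB (n : ℕ) (hn : 1 ≤ n) (s : ℝ) (hs0 : 0 < s) (hs1 : s < 1)
    (Ω : Set (Rn n)) (hΩo : IsOpen Ω) (hΩb : IsBounded Ω) (hΩl : HasLipschitzBoundary Ω) :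
    ∫⁻ x in Ω, ENNReal.ofReal ((infDist x Ωᶜ) ^ (-s)) < ⊤ := by
  rcases Set.eq_empty_or_nonempty Ω with hΩe | hΩne
  · simp [hΩe]
  have hUn : Ω ≠ univ := by
    intro h
    rw [h] at hΩb
    obtain ⟨C, hC⟩ := (Metric.isBounded_iff).mp hΩb
    have h1 := hC (mem_univ (0 : Rn n)) (mem_univ (EuclideanSpace.single (⟨0, hn⟩ : Fin n) (|C|+1)))
    rw [dist_zero_left, EuclideanSpace.norm_single] at h1
    rw [Real.norm_eq_abs, abs_of_nonneg (by positivity)] at h1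
    have := le_abs_self C
    linarith
  have hne : Ωᶜ.Nonempty := nonempty_compl.mpr hUn
  have hδpos : ∀ x ∈ Ω, 0 < infDist x Ωᶜ := by
    intro x hx
    obtain ⟨η, hη, hsub⟩ := Metric.isOpen_iff.mp hΩo x hx
    by_contra hcon
    push_neg at hcon
    have : infDist x Ωᶜ < η := lt_of_le_of_lt hcon hη
    obtain ⟨q, hq, hqd⟩ := (infDist_lt_iff hne).mp this
    exact hq (hsub (mem_ball'.mpr hqd))
  have hfc : IsCompact (frontier Ω) :=
    Metric.isCompact_of_isClosed_isBounded isClosed_frontier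
      (hΩb.closure.subset frontier_subset_closure)
  -- choose boundary data
  have hdata := fun z : frontier Ω => hΩl z.1 z.2
  choose rad hrad ν hν L ψ hψ hgr using hdata
  have hcover : frontier Ω ⊆ ⋃ z : frontier Ω, ball (z:Rn n) (rad z / 4) := by
    intro w hw
    exact mem_iUnion.mpr ⟨⟨w, hw⟩, mem_ball_self (by linarith [hrad ⟨w, hw⟩])⟩
  obtain ⟨t, ht⟩ := hfc.elim_finite_subcover _ (fun z => isOpen_ball) hcover
  rcases t.eq_empty_or_nonempty with hte | htne
  · -- frontier is empty: impossible
    exfalso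
    rw [hte] at ht
    simp only [Finset.notMem_empty, iUnion_of_empty, iUnion_empty] at ht
    have hfe : frontier Ω = ∅ := subset_empty_iff.mp ht
    have hclop : IsClopen Ω := isClopen_iff_frontier_eq_empty.mpr hfe
    rcases isClopen_iff.mp hclop with h | h
    · exact hΩne.ne_empty h
    · exact hUn h
  · set ρ : ℝ := t.inf' htne (fun z => rad z / 4) with hρ
    have hρpos : 0 < ρ := by
      rw [hρ, Finset.lt_inf'_iff]
      intro z hz
      linarith [hrad z]
    set A : Set (Rn n) := {x ∈ Ω | ρ ≤ infDist x Ωᶜ} with hA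
    have hsplit : Ω ⊆ A ∪ ⋃ i ∈ t, (Ω ∩ ball (i:Rn n) (rad i / 2)) := by
      intro x hx
      rcases le_or_gt ρ (infDist x Ωᶜ) with h | h
      · exact Or.inl ⟨hx, h⟩
      · obtain ⟨w, hw, hwd⟩ := seg_lemma hΩo hne hx h
        obtain ⟨i, hit, hwi⟩ := by
          have := ht hw
          simp only [mem_iUnion, exists_prop] at this
          exact this
        refine Or.inr (mem_iUnion.mpr ⟨i, mem_iUnion.mpr ⟨hit, hx, ?_⟩⟩)
        rw [mem_ball]
        have hρi : ρ ≤ rad i / 4 := Finset.inf'_le _ hit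
        calc dist x i ≤ dist x w + dist w i := dist_triangle _ _ _
          _ < ρ + rad i / 4 := add_lt_add hwd (mem_ball.mp hwi)
          _ ≤ rad i / 2 := by linarith
    calc ∫⁻ x in Ω, ENNReal.ofReal ((infDist x Ωᶜ) ^ (-s))
        ≤ ∫⁻ x in A ∪ ⋃ i ∈ t, (Ω ∩ ball (i:Rn n) (rad i / 2)),
            ENNReal.ofReal ((infDist x Ωᶜ) ^ (-s)) :=
          lintegral_mono' (Measure.restrict_mono hsplit le_rfl) le_rfl
      _ ≤ (∫⁻ x in A, ENNReal.ofReal ((infDist x Ωᶜ) ^ (-s))) +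
          ∫⁻ x in ⋃ i ∈ t, (Ω ∩ ball (i:Rn n) (rad i / 2)),
            ENNReal.ofReal ((infDist x Ωᶜ) ^ (-s)) := lintegral_union_le _ _ _
      _ < ⊤ := by
          refine ENNReal.add_lt_top.mpr ⟨?_, ?_⟩
          · -- the inner part
            have hAb : ∀ x ∈ A, ENNReal.ofReal ((infDist x Ωᶜ) ^ (-s))
                ≤ ENNReal.ofReal (ρ ^ (-s)) := by
              intro x hx
              exact ENNReal.ofReal_le_ofReal (rpow_neg_anti hρpos hx.2 hs0.le)
            have hAm : MeasurableSet A :=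
              hΩo.measurableSet.inter
                (measurableSet_le measurable_const (continuous_infDist_pt _).measurable)
            calc ∫⁻ x in A, ENNReal.ofReal ((infDist x Ωᶜ) ^ (-s))
                ≤ ∫⁻ _ in A, ENNReal.ofReal (ρ ^ (-s)) := setLIntegral_mono' hAm hAb
              _ = ENNReal.ofReal (ρ ^ (-s)) * volume A := setLIntegral_const _ _
              _ ≤ ENNReal.ofReal (ρ ^ (-s)) * volume Ω := by
                  gcongr
                  exact fun x hx => hx.1
              _ < ⊤ := ENNReal.mul_lt_top ENNReal.ofReal_lt_top hΩb.measure_lt_top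
          · -- the boundary part
            have hrw : (⋃ i ∈ t, (Ω ∩ ball ((i : Rn n)) (rad i / 2)))
                = ⋃ i : {z // z ∈ t}, (Ω ∩ ball ((i.1 : Rn n)) (rad i.1 / 2)) := by
              ext x; simp
            rw [hrw]
            calc ∫⁻ x in ⋃ i : {z // z ∈ t}, (Ω ∩ ball ((i.1:Rn n)) (rad i.1 / 2)),
                  ENNReal.ofReal ((infDist x Ωᶜ) ^ (-s))
                ≤ ∑' i : {z // z ∈ t}, ∫⁻ x in Ω ∩ ball ((i.1:Rn n)) (rad i.1 / 2),
                    ENNReal.ofReal ((infDist x Ωᶜ) ^ (-s)) := lintegral_iUnion_le _ _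
              _ < ⊤ := by
                  rw [tsum_fintype]
                  refine ENNReal.sum_lt_top.mpr fun i _ => ?_
                  have hiΩ : ((i.1:frontier Ω):Rn n) ∉ Ω :=
                    ((hΩo.frontier_eq.subset) (i.1:frontier Ω).2).2
                  exact perBall hs0 hs1 hΩo hne hiΩ (hrad _) (hν _) (hψ _) (hgr _)

lemma QQ_split {n : ℕ} (Ω : Set (Rn n)) :
    QQ Ω = (Ω ×ˢ Ω) ∪ ((Ω ×ˢ Ωᶜ) ∪ (Ωᶜ ×ˢ Ω)) := by
  ext p
  simp only [QQ, mem_compl_iff, mem_prod, mem_union, not_and_or]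
  tauto

/-- boundary-interaction integral is finite. -/
lemma lemK (n : ℕ) (hn : 1 ≤ n) (s : ℝ) (hs0 : 0 < s) (hs1 : s < 1)
    (Ω : Set (Rn n)) (hΩo : IsOpen Ω) (hΩb : IsBounded Ω) (hΩl : HasLipschitzBoundary Ω) :
    ∫⁻ x in Ω, ∫⁻ y in Ωᶜ, ENNReal.ofReal (1 / dist x y ^ ((n : ℝ) + s)) < ⊤ := by
  rcases Set.eq_empty_or_nonempty Ω with hΩe | hΩne
  · simp [hΩe]
  have hUn : Ω ≠ univ := by
    intro h
    rw [h] at hΩb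
    obtain ⟨C, hC⟩ := (Metric.isBounded_iff).mp hΩb
    have h1 := hC (mem_univ (0 : Rn n)) (mem_univ (EuclideanSpace.single (⟨0, hn⟩ : Fin n) (|C|+1)))
    rw [dist_zero_left, EuclideanSpace.norm_single, Real.norm_eq_abs,
      abs_of_nonneg (by positivity)] at h1
    linarith [le_abs_self C]
  have hne : Ωᶜ.Nonempty := nonempty_compl.mpr hUn
  have hδpos : ∀ x ∈ Ω, 0 < infDist x Ωᶜ := by
    intro x hx
    obtain ⟨η, hη, hsub⟩ := Metric.isOpen_iff.mp hΩo x hx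
    by_contra hcon
    push_neg at hcon
    obtain ⟨qq, hq, hqd⟩ := (infDist_lt_iff hne).mp (lt_of_le_of_lt hcon hη)
    exact hq (hsub (mem_ball'.mpr hqd))
  obtain ⟨C, hCt, hCb⟩ := lemA n s hs0 Ω
  have hΩm : MeasurableSet Ω := hΩo.measurableSet
  calc ∫⁻ x in Ω, ∫⁻ y in Ωᶜ, ENNReal.ofReal (1 / dist x y ^ ((n : ℝ) + s))
      ≤ ∫⁻ x in Ω, C * ENNReal.ofReal ((infDist x Ωᶜ) ^ (-s)) := by
        refine setLIntegral_mono' hΩm fun x hx => hCb x (hδpos x hx)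
    _ = C * ∫⁻ x in Ω, ENNReal.ofReal ((infDist x Ωᶜ) ^ (-s)) :=
        lintegral_const_mul' _ _ hCt
    _ < ⊤ := ENNReal.mul_lt_top hCt.lt_top (lemB n hn s hs0 hs1 Ω hΩo hΩb hΩl)

lemma intOn_nonneg {α : Type*} [MeasurableSpace α] {μ : Measure α} {f : α → ℝ}
    (hm : Measurable f) (h0 : ∀ a, 0 ≤ f a)
    (hfin : ∫⁻ a, ENNReal.ofReal (f a) ∂μ < ⊤) : Integrable f μ :=
  ⟨hm.aestronglyMeasurable, (hasFiniteIntegral_iff_ofReal (ae_of_all _ h0)).2 hfin⟩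

lemma lint_prod_restrict {n : ℕ} (A B : Set (Rn n)) {f : Rn n × Rn n → ℝ≥0∞}
    (hf : Measurable f) :
    ∫⁻ p in A ×ˢ B, f p = ∫⁻ x in A, ∫⁻ y in B, f (x, y) := by
  rw [Measure.volume_eq_prod, ← Measure.prod_restrict, lintegral_prod _ hf.aemeasurable]

lemma lint_prod_restrict_symm {n : ℕ} (A B : Set (Rn n)) {f : Rn n × Rn n → ℝ≥0∞}
    (hf : Measurable f) :
    ∫⁻ p in A ×ˢ B, f p = ∫⁻ y in B, ∫⁻ x in A, f (x, y) := by
  rw [Measure.volume_eq_prod, ← Measure.prod_restrict, lintegral_prod_symm _ hf.aemeasurable]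

lemma meas_dd {n : ℕ} (s : ℝ) :
    Measurable fun p : Rn n × Rn n => dist p.1 p.2 ^ ((n : ℝ) + s) :=
  (measurable_fst.dist measurable_snd).pow_const _

/-- integrability of the Gagliardo integrand over `Ω ×ˢ Ω`. -/
lemma intOn_prodΩ {n : ℕ} {s : ℝ} {Ω : Set (Rn n)} {f : Rn n → ℝ}
    (hf : Measurable f) (hgag : gagliardo n s Ω f < ⊤) :
    IntegrableOn (fun p : Rn n × Rn n => |f p.1 - f p.2| / dist p.1 p.2 ^ ((n : ℝ) + s))
      (Ω ×ˢ Ω) := by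
  have hm : Measurable fun p : Rn n × Rn n =>
      |f p.1 - f p.2| / dist p.1 p.2 ^ ((n : ℝ) + s) :=
    (((hf.comp measurable_fst).sub (hf.comp measurable_snd)).abs).div (meas_dd s)
  refine intOn_nonneg hm (fun p => by positivity) ?_
  rw [lint_prod_restrict Ω Ω hm.ennreal_ofReal]
  exact hgag

/-- integrability of a constant over the tail region `Ω ×ˢ Ωᶜ`. -/
lemma intOn_tail₁ {n : ℕ} (hn : 1 ≤ n) {s : ℝ} (hs0 : 0 < s) (hs1 : s < 1)
    {Ω : Set (Rn n)} (hΩo : IsOpen Ω) (hΩb : IsBounded Ω) (hΩl : HasLipschitzBoundary Ω)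
    {c : ℝ} (hc : 0 ≤ c) :
    IntegrableOn (fun p : Rn n × Rn n => c / dist p.1 p.2 ^ ((n : ℝ) + s)) (Ω ×ˢ Ωᶜ) := by
  have hm : Measurable fun p : Rn n × Rn n => c / dist p.1 p.2 ^ ((n : ℝ) + s) :=
    measurable_const.div (meas_dd s)
  refine intOn_nonneg hm (fun p => by positivity) ?_
  rw [lint_prod_restrict Ω Ωᶜ hm.ennreal_ofReal]
  have hpt : ∀ x y : Rn n, ENNReal.ofReal (c / dist x y ^ ((n:ℝ)+s))
      = ENNReal.ofReal c * ENNReal.ofReal (1 / dist x y ^ ((n:ℝ)+s)) := by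
    intro x y
    rw [← ENNReal.ofReal_mul hc, ← mul_one_div]
  calc ∫⁻ x in Ω, ∫⁻ y in Ωᶜ, ENNReal.ofReal (c / dist x y ^ ((n:ℝ)+s))
      = ∫⁻ x in Ω, ENNReal.ofReal c * ∫⁻ y in Ωᶜ, ENNReal.ofReal (1 / dist x y ^ ((n:ℝ)+s)) := by
        congr 1
        funext x
        simp_rw [hpt]
        exact lintegral_const_mul' _ _ ENNReal.ofReal_ne_top
    _ = ENNReal.ofReal c * ∫⁻ x in Ω, ∫⁻ y in Ωᶜ, ENNReal.ofReal (1 / dist x y ^ ((n:ℝ)+s)) :=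
        lintegral_const_mul' _ _ ENNReal.ofReal_ne_top
    _ < ⊤ := ENNReal.mul_lt_top ENNReal.ofReal_lt_top
        (lemK n hn s hs0 hs1 Ω hΩo hΩb hΩl)

/-- integrability of a constant over the tail region `Ωᶜ ×ˢ Ω`. -/
lemma intOn_tail₂ {n : ℕ} (hn : 1 ≤ n) {s : ℝ} (hs0 : 0 < s) (hs1 : s < 1)
    {Ω : Set (Rn n)} (hΩo : IsOpen Ω) (hΩb : IsBounded Ω) (hΩl : HasLipschitzBoundary Ω)
    {c : ℝ} (hc : 0 ≤ c) :
    IntegrableOn (fun p : Rn n × Rn n => c / dist p.1 p.2 ^ ((n : ℝ) + s)) (Ωᶜ ×ˢ Ω) := by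
  have hm : Measurable fun p : Rn n × Rn n => c / dist p.1 p.2 ^ ((n : ℝ) + s) :=
    measurable_const.div (meas_dd s)
  refine intOn_nonneg hm (fun p => by positivity) ?_
  rw [lint_prod_restrict_symm Ωᶜ Ω hm.ennreal_ofReal]
  have hpt : ∀ x y : Rn n, ENNReal.ofReal (c / dist x y ^ ((n:ℝ)+s))
      = ENNReal.ofReal c * ENNReal.ofReal (1 / dist y x ^ ((n:ℝ)+s)) := by
    intro x y
    rw [← ENNReal.ofReal_mul hc, ← mul_one_div, dist_comm]
  calc ∫⁻ y in Ω, ∫⁻ x in Ωᶜ, ENNReal.ofReal (c / dist x y ^ ((n:ℝ)+s))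
      = ∫⁻ y in Ω, ENNReal.ofReal c * ∫⁻ x in Ωᶜ, ENNReal.ofReal (1 / dist y x ^ ((n:ℝ)+s)) := by
        congr 1
        funext y
        simp_rw [hpt]
        exact lintegral_const_mul' _ _ ENNReal.ofReal_ne_top
    _ = ENNReal.ofReal c * ∫⁻ y in Ω, ∫⁻ x in Ωᶜ, ENNReal.ofReal (1 / dist y x ^ ((n:ℝ)+s)) :=
        lintegral_const_mul' _ _ ENNReal.ofReal_ne_top
    _ < ⊤ := ENNReal.mul_lt_top ENNReal.ofReal_lt_top
        (lemK n hn s hs0 hs1 Ω hΩo hΩb hΩl)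

/-- transfer of an a.e. property on `Ωᶜ` to the second coordinate on `A ×ˢ Ωᶜ`. -/
lemma ae_prod_snd {n : ℕ} {Ω : Set (Rn n)} (A : Set (Rn n)) {P : Rn n → Prop}
    (hae : ∀ᵐ x ∂(volume.restrict Ωᶜ), P x) :
    ∀ᵐ p : Rn n × Rn n ∂(volume.restrict (A ×ˢ Ωᶜ)), P p.2 := by
  rw [ae_iff] at hae ⊢
  rw [Measure.volume_eq_prod, ← Measure.prod_restrict]
  have hset : {p : Rn n × Rn n | ¬ P p.2} = ((univ : Set (Rn n)) ×ˢ {x | ¬ P x}) := by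
    ext p; simp
  rw [hset, Measure.prod_prod, hae, mul_zero]

/-- transfer of an a.e. property on `Ωᶜ` to the first coordinate on `Ωᶜ ×ˢ A`. -/
lemma ae_prod_fst {n : ℕ} {Ω : Set (Rn n)} (A : Set (Rn n)) {P : Rn n → Prop}
    (hae : ∀ᵐ x ∂(volume.restrict Ωᶜ), P x) :
    ∀ᵐ p : Rn n × Rn n ∂(volume.restrict (Ωᶜ ×ˢ A)), P p.1 := by
  rw [ae_iff] at hae ⊢
  rw [Measure.volume_eq_prod, ← Measure.prod_restrict]
  have hset : {p : Rn n × Rn n | ¬ P p.1} = ({x | ¬ P x} ×ˢ (univ : Set (Rn n))) := by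
    ext p; simp
  rw [hset, Measure.prod_prod, hae, zero_mul]

lemma div_mono_num {a b d : ℝ} (hab : a ≤ b) (hd : 0 ≤ d) : a / d ≤ b / d := by
  rw [div_eq_mul_inv, div_eq_mul_inv]
  exact mul_le_mul_of_nonneg_right hab (inv_nonneg.mpr hd)

lemma mynorm_div_le {a m d : ℝ} (ha : |a| ≤ m) (hd : 0 ≤ d) : ‖a / d‖ ≤ m / d := by
  rw [Real.norm_eq_abs, abs_div, abs_of_nonneg hd]
  exact div_mono_num ha hd

/-- subadditivity-type bound for the Gagliardo seminorm. -/
lemma gag_le {n : ℕ} {s : ℝ} {Ω : Set (Rn n)} {f g h : Rn n → ℝ}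
    (hg : Measurable g) (hh : Measurable h) {c1 c2 : ℝ} (hc1 : 0 ≤ c1) (hc2 : 0 ≤ c2)
    (hb : ∀ x y, |f x - f y| ≤ c1 * |g x - g y| + c2 * |h x - h y|) :
    gagliardo n s Ω f ≤ ENNReal.ofReal c1 * gagliardo n s Ω g
      + ENNReal.ofReal c2 * gagliardo n s Ω h := by
  set r : ℝ := (n:ℝ) + s with hr
  have hptw : ∀ x y : Rn n, ENNReal.ofReal (|f x - f y| / dist x y ^ r)
      ≤ ENNReal.ofReal c1 * ENNReal.ofReal (|g x - g y| / dist x y ^ r)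
        + ENNReal.ofReal c2 * ENNReal.ofReal (|h x - h y| / dist x y ^ r) := by
    intro x y
    have hd : (0:ℝ) ≤ dist x y ^ r := by positivity
    calc ENNReal.ofReal (|f x - f y| / dist x y ^ r)
        ≤ ENNReal.ofReal ((c1 * |g x - g y| + c2 * |h x - h y|) / dist x y ^ r) :=
          ENNReal.ofReal_le_ofReal (div_mono_num (hb x y) hd)
      _ = ENNReal.ofReal (c1 * (|g x - g y| / dist x y ^ r)
            + c2 * (|h x - h y| / dist x y ^ r)) := by
          rw [add_div, mul_div_assoc, mul_div_assoc]
      _ ≤ _ := by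
          rw [ENNReal.ofReal_add (by positivity) (by positivity),
            ENNReal.ofReal_mul hc1, ENNReal.ofReal_mul hc2]
  have hgm : Measurable fun q : Rn n × Rn n => ENNReal.ofReal (|g q.1 - g q.2| / dist q.1 q.2 ^ r) :=
    (((((hg.comp measurable_fst).sub (hg.comp measurable_snd)).abs).div (meas_dd s))).ennreal_ofReal
  have hhm : Measurable fun q : Rn n × Rn n => ENNReal.ofReal (|h q.1 - h q.2| / dist q.1 q.2 ^ r) :=
    (((((hh.comp measurable_fst).sub (hh.comp measurable_snd)).abs).div (meas_dd s))).ennreal_ofReal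
  have hgout : Measurable fun x : Rn n => ∫⁻ y in Ω, ENNReal.ofReal (|g x - g y| / dist x y ^ r) :=
    hgm.lintegral_prod_right'
  calc gagliardo n s Ω f
      ≤ ∫⁻ x in Ω, ∫⁻ y in Ω,
          (ENNReal.ofReal c1 * ENNReal.ofReal (|g x - g y| / dist x y ^ r)
            + ENNReal.ofReal c2 * ENNReal.ofReal (|h x - h y| / dist x y ^ r)) := by
        refine lintegral_mono fun x => lintegral_mono fun y => hptw x y
    _ = ∫⁻ x in Ω, (ENNReal.ofReal c1 * ∫⁻ y in Ω, ENNReal.ofReal (|g x - g y| / dist x y ^ r))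
          + (ENNReal.ofReal c2 * ∫⁻ y in Ω, ENNReal.ofReal (|h x - h y| / dist x y ^ r)) := by
        congr 1
        funext x
        rw [lintegral_add_left]
        · rw [lintegral_const_mul' _ _ ENNReal.ofReal_ne_top,
            lintegral_const_mul' _ _ ENNReal.ofReal_ne_top]
        · exact (hgm.comp measurable_prodMk_left).const_mul _
    _ = ENNReal.ofReal c1 * gagliardo n s Ω g + ENNReal.ofReal c2 * gagliardo n s Ω h := by
        rw [lintegral_add_left]
        · unfold gagliardo
          rw [lintegral_const_mul' _ _ ENNReal.ofReal_ne_top,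
            lintegral_const_mul' _ _ ENNReal.ofReal_ne_top]
        · exact hgout.const_mul _

lemma my_abs_sub (x y : ℝ) : |x - y| ≤ |x| + |y| := by
  rw [sub_eq_add_neg]
  exact le_trans (abs_add_le x (-y)) (by rw [abs_neg])

theorem truncation_of_minimal_fn_is_minimal
    (n : ℕ) (hn : 1 ≤ n) (s : ℝ) (hs : s ∈ Set.Ioo (0 : ℝ) 1)
    (Ω : Set (Rn n)) (hΩo : IsOpen Ω) (hΩb : Bornology.IsBounded Ω)
    (hΩl : HasLipschitzBoundary Ω)
    (u : Rn n → ℝ) (hu : IsMinimalFn n s Ω u) :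
    ∀ (lam ε : ℝ), 0 < ε →
      IsMinimalFn n s Ω
        (fun x => ε⁻¹ * min ε (max (u x - lam + Real.sqrt ε) 0)) := by
  obtain ⟨hs0, hs1⟩ := hs
  obtain ⟨⟨humeas, huint, hugag⟩, humin⟩ := hu
  intro lam ε hε
  have hvol : volume Ω < ⊤ := hΩb.measure_lt_top
  set c : ℝ := lam - Real.sqrt ε with hc
  set φ : Rn n → ℝ := fun x => ε⁻¹ * clmp 0 ε c (u x) with hφ
  have hrw : (fun x => ε⁻¹ * min ε (max (u x - lam + Real.sqrt ε) 0)) = φ := by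
    funext x
    simp only [hφ, clmp]
    rw [show u x - lam + Real.sqrt ε = u x - c by rw [hc]; ring]
  rw [hrw]
  -- basic facts about φ
  have hφ0 : ∀ x, 0 ≤ φ x := fun x =>
    mul_nonneg (inv_nonneg.mpr hε.le) (clmp_mem hε.le (u x)).1
  have hφ1 : ∀ x, φ x ≤ 1 := by
    intro x
    have h1 := (clmp_mem (lo := 0) (c := c) hε.le (u x)).2
    calc φ x ≤ ε⁻¹ * ε := mul_le_mul_of_nonneg_left h1 (inv_nonneg.mpr hε.le)
      _ = 1 := inv_mul_cancel₀ hε.ne'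
  have hφLip : ∀ x y, |φ x - φ y| ≤ ε⁻¹ * |u x - u y| := by
    intro x y
    simp only [hφ]
    rw [← mul_sub, abs_mul, abs_of_nonneg (inv_nonneg.mpr hε.le)]
    exact mul_le_mul_of_nonneg_left abs_clmp_sub_clmp (inv_nonneg.mpr hε.le)
  have hεφ : ∀ x y, ε * |φ x - φ y| ≤ |u x - u y| := by
    intro x y
    have h := hφLip x y
    calc ε * |φ x - φ y| ≤ ε * (ε⁻¹ * |u x - u y|) :=
          mul_le_mul_of_nonneg_left h hε.le
      _ = |u x - u y| := by field_simp
  have hclmpmeas : Measurable fun x => clmp 0 ε c (u x) := by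
    unfold clmp
    exact measurable_const.min ((humeas.sub measurable_const).max measurable_const)
  have hφmeas : Measurable φ := by
    rw [hφ]; exact hclmpmeas.const_mul _
  have hφint : IntegrableOn φ Ω := by
    refine Integrable.mono' (g := fun _ => (1:ℝ))
      (integrableOn_const hvol.ne) hφmeas.aestronglyMeasurable
      (ae_of_all _ fun x => ?_)
    rw [Real.norm_eq_abs, abs_of_nonneg (hφ0 x)]
    exact hφ1 x
  have hφgag : gagliardo n s Ω φ < ⊤ := by
    have h := gag_le (Ω := Ω) (s := s) humeas humeas (c1 := ε⁻¹) (c2 := 0)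
      (inv_nonneg.mpr hε.le) le_rfl
      (fun x y => by rw [zero_mul, add_zero]; exact hφLip x y)
    refine lt_of_le_of_lt h ?_
    rw [ENNReal.ofReal_zero, zero_mul, add_zero]
    exact ENNReal.mul_lt_top ENNReal.ofReal_lt_top hugag
  refine ⟨⟨hφmeas, hφint, hφgag⟩, ?_⟩
  intro v hv hveq
  obtain ⟨hvmeas, hvint, hvgag⟩ := hv
  -- the truncated competitor
  set Tv : Rn n → ℝ := fun x => clmp (-1) 1 0 (v x) with hTvdef
  have hTvmeas : Measurable Tv := by
    rw [hTvdef]; unfold clmp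
    exact measurable_const.min ((hvmeas.sub measurable_const).max measurable_const)
  have hTvb : ∀ x, -1 ≤ Tv x ∧ Tv x ≤ 1 := fun x => clmp_mem (by norm_num) (v x)
  have hTvLip : ∀ x y, |Tv x - Tv y| ≤ |v x - v y| := by
    intro x y
    simp only [hTvdef]
    have h := abs_clmp_sub_clmp (lo := -1) (hi := 1) (c := 0) (a := v x) (b := v y)
    exact h
  have hTveq : ∀ᵐ x ∂(volume.restrict Ωᶜ), Tv x = φ x := by
    filter_upwards [hveq] with x hx
    simp only [hTvdef]
    rw [hx, clmp_of_mem (by rw [sub_zero]; linarith [hφ0 x])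
      (by rw [sub_zero]; exact hφ1 x), sub_zero]
  set w : Rn n → ℝ := fun x => u x + ε * (Tv x - φ x) with hwdef
  have hweq : ∀ᵐ x ∂(volume.restrict Ωᶜ), w x = u x := by
    filter_upwards [hTveq] with x hx
    simp only [hwdef]
    rw [hx]; ring
  have hwmeas : Measurable w := by
    rw [hwdef]
    exact humeas.add ((hTvmeas.sub hφmeas).const_mul ε)
  have hTvφb : ∀ x, |Tv x - φ x| ≤ 2 := by
    intro x
    have h1 := hTvb x
    have h2 := hφ0 x
    have h3 := hφ1 x
    rw [abs_le]
    constructor <;> linarith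
  have hwbnd : ∀ x y, |w x - w y| ≤ 2 * |u x - u y| + ε * |v x - v y| := by
    intro x y
    have hexp : w x - w y = (u x - u y) + ε * (Tv x - Tv y) + -(ε * (φ x - φ y)) := by
      simp only [hwdef]; ring
    have h1 : |w x - w y| ≤ |u x - u y| + |ε * (Tv x - Tv y)| + |ε * (φ x - φ y)| := by
      rw [hexp]
      refine le_trans (abs_add_three _ _ _) ?_
      rw [abs_neg]
    have h2 : |ε * (Tv x - Tv y)| = ε * |Tv x - Tv y| := by
      rw [abs_mul, abs_of_nonneg hε.le]
    have h3 : |ε * (φ x - φ y)| = ε * |φ x - φ y| := by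
      rw [abs_mul, abs_of_nonneg hε.le]
    have h4 := hTvLip x y
    have h5 := hεφ x y
    have h6 : ε * |Tv x - Tv y| ≤ ε * |v x - v y| := mul_le_mul_of_nonneg_left h4 hε.le
    nlinarith
  have hwint : IntegrableOn w Ω := by
    rw [hwdef]
    refine huint.add ?_
    refine Integrable.mono' (g := fun _ => ε * 2)
      (integrableOn_const hvol.ne)
      ((hTvmeas.sub hφmeas).const_mul ε).aestronglyMeasurable
      (ae_of_all _ fun x => ?_)
    rw [Real.norm_eq_abs, abs_mul, abs_of_nonneg hε.le]
    exact mul_le_mul_of_nonneg_left (hTvφb x) hε.le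
  have hwgag : gagliardo n s Ω w < ⊤ := by
    have h := gag_le (Ω := Ω) (s := s) humeas hvmeas (c1 := 2) (c2 := ε)
      (by norm_num) hε.le hwbnd
    refine lt_of_le_of_lt h ?_
    exact ENNReal.add_lt_top.mpr
      ⟨ENNReal.mul_lt_top ENNReal.ofReal_lt_top hugag,
       ENNReal.mul_lt_top ENNReal.ofReal_lt_top hvgag⟩
  -- integrands
  set F : Rn n × Rn n → ℝ :=
    fun p => (|φ p.1 - φ p.2| - |v p.1 - v p.2|) / dist p.1 p.2 ^ ((n : ℝ) + s) with hF
  by_cases hFint : IntegrableOn F (QQ Ω)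
  swap
  · rw [integral_undef hFint]
  set F1 : Rn n × Rn n → ℝ :=
    fun p => (|φ p.1 - φ p.2| - |Tv p.1 - Tv p.2|) / dist p.1 p.2 ^ ((n : ℝ) + s) with hF1
  set G : Rn n × Rn n → ℝ :=
    fun p => (|u p.1 - u p.2| - |w p.1 - w p.2|) / dist p.1 p.2 ^ ((n : ℝ) + s) with hG
  have hGle0 : ∫ p in QQ Ω, G p ≤ 0 := humin w ⟨hwmeas, hwint, hwgag⟩ hweq
  have measF1 : Measurable F1 := by
    rw [hF1]
    exact ((((hφmeas.comp measurable_fst).sub (hφmeas.comp measurable_snd)).abs).sub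
      (((hTvmeas.comp measurable_fst).sub (hTvmeas.comp measurable_snd)).abs)).div (meas_dd s)
  have measG : Measurable G := by
    rw [hG]
    exact ((((humeas.comp measurable_fst).sub (humeas.comp measurable_snd)).abs).sub
      (((hwmeas.comp measurable_fst).sub (hwmeas.comp measurable_snd)).abs)).div (meas_dd s)
  -- pointwise monotonicity
  have hmono1 : ∀ p : Rn n × Rn n, F p ≤ F1 p := by
    intro p
    simp only [hF, hF1]
    refine div_mono_num ?_ (by positivity)
    linarith [hTvLip p.1 p.2]
  have hmono2 : ∀ p : Rn n × Rn n, F1 p ≤ ε⁻¹ * G p := by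
    intro p
    have hkey := key_alg hε c (u p.1) (u p.2) (Tv p.1) (Tv p.2)
    have hd : (0:ℝ) ≤ dist p.1 p.2 ^ ((n : ℝ) + s) := by positivity
    simp only [hF1, hG, hwdef, hφ]
    rw [mul_div_assoc']
    refine div_mono_num ?_ hd
    have h6 : ∀ X : ℝ, ε⁻¹ * (ε * X) = X := fun X => by field_simp
    have h5 := mul_le_mul_of_nonneg_left hkey (inv_nonneg.mpr hε.le)
    rw [h6] at h5
    linarith
  -- integrability of F1 on QQ Ω
  have hintF1 : IntegrableOn F1 (QQ Ω) := by
    rw [QQ_split]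
    refine IntegrableOn.union ?_ (IntegrableOn.union ?_ ?_)
    · refine Integrable.mono'
        ((intOn_prodΩ hφmeas hφgag).add (intOn_prodΩ hvmeas hvgag))
        measF1.aestronglyMeasurable (ae_of_all _ fun p => ?_)
      simp only [hF1]
      have hb : |(|φ p.1 - φ p.2| - |Tv p.1 - Tv p.2|)| ≤ |φ p.1 - φ p.2| + |v p.1 - v p.2| := by
        have h1 := my_abs_sub (|φ p.1 - φ p.2|) (|Tv p.1 - Tv p.2|)
        rw [abs_abs, abs_abs] at h1
        linarith [hTvLip p.1 p.2]
      refine le_trans (mynorm_div_le hb (by positivity)) ?_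
      rw [add_div]
      exact le_of_eq rfl
    · refine Integrable.mono'
        (intOn_tail₁ hn hs0 hs1 hΩo hΩb hΩl (c := 2) (by norm_num))
        measF1.aestronglyMeasurable ?_
      filter_upwards [ae_prod_snd (Ω := Ω) Ω hveq] with p hp
      simp only [hF1]
      have hTv2 : Tv p.2 = φ p.2 := by
        simp only [hTvdef]
        rw [hp, clmp_of_mem (by rw [sub_zero]; linarith [hφ0 p.2])
          (by rw [sub_zero]; exact hφ1 p.2), sub_zero]
      rw [hTv2]
      refine mynorm_div_le ?_ (by positivity)
      have h1 : |(|φ p.1 - φ p.2| - |Tv p.1 - φ p.2|)| ≤ |φ p.1 - Tv p.1| := by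
        have := abs_abs_sub_abs_le_abs_sub (φ p.1 - φ p.2) (Tv p.1 - φ p.2)
        simpa using this
      have h2 : |φ p.1 - Tv p.1| ≤ 2 := by
        have := hTvb p.1
        have := hφ0 p.1
        have := hφ1 p.1
        rw [abs_le]; constructor <;> linarith [(hTvb p.1).1, (hTvb p.1).2, hφ0 p.1, hφ1 p.1]
      linarith
    · refine Integrable.mono'
        (intOn_tail₂ hn hs0 hs1 hΩo hΩb hΩl (c := 2) (by norm_num))
        measF1.aestronglyMeasurable ?_
      filter_upwards [ae_prod_fst (Ω := Ω) Ω hveq] with p hp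
      simp only [hF1]
      have hTv1 : Tv p.1 = φ p.1 := by
        simp only [hTvdef]
        rw [hp, clmp_of_mem (by rw [sub_zero]; linarith [hφ0 p.1])
          (by rw [sub_zero]; exact hφ1 p.1), sub_zero]
      rw [hTv1]
      refine mynorm_div_le ?_ (by positivity)
      have h1 : |(|φ p.1 - φ p.2| - |φ p.1 - Tv p.2|)| ≤ |φ p.2 - Tv p.2| := by
        have := abs_abs_sub_abs_le_abs_sub (φ p.1 - φ p.2) (φ p.1 - Tv p.2)
        have h0 : (φ p.1 - φ p.2) - (φ p.1 - Tv p.2) = Tv p.2 - φ p.2 := by ring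
        rw [h0] at this
        rw [abs_sub_comm (φ p.2)]
        exact this
      have h2 : |φ p.2 - Tv p.2| ≤ 2 := by
        rw [abs_le]; constructor <;> linarith [(hTvb p.2).1, (hTvb p.2).2, hφ0 p.2, hφ1 p.2]
      linarith
  -- integrability of G on QQ Ω
  have hintG : IntegrableOn G (QQ Ω) := by
    rw [QQ_split]
    refine IntegrableOn.union ?_ (IntegrableOn.union ?_ ?_)
    · refine Integrable.mono'
        (((intOn_prodΩ humeas hugag).const_mul 3).add
          ((intOn_prodΩ hvmeas hvgag).const_mul ε))
        measG.aestronglyMeasurable (ae_of_all _ fun p => ?_)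
      simp only [hG]
      have hb : |(|u p.1 - u p.2| - |w p.1 - w p.2|)|
          ≤ 3 * |u p.1 - u p.2| + ε * |v p.1 - v p.2| := by
        have h1 := my_abs_sub (|u p.1 - u p.2|) (|w p.1 - w p.2|)
        rw [abs_abs, abs_abs] at h1
        linarith [hwbnd p.1 p.2]
      refine le_trans (mynorm_div_le hb (by positivity)) ?_
      rw [add_div, mul_div_assoc, mul_div_assoc]
      exact le_of_eq rfl
    · refine Integrable.mono'
        (intOn_tail₁ hn hs0 hs1 hΩo hΩb hΩl (c := ε * 2) (by positivity))
        measG.aestronglyMeasurable ?_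
      filter_upwards [ae_prod_snd (Ω := Ω) Ω hweq] with p hp
      simp only [hG]
      rw [hp]
      refine mynorm_div_le ?_ (by positivity)
      have h1 : |(|u p.1 - u p.2| - |w p.1 - u p.2|)| ≤ |u p.1 - w p.1| := by
        have := abs_abs_sub_abs_le_abs_sub (u p.1 - u p.2) (w p.1 - u p.2)
        simpa using this
      have h2 : |u p.1 - w p.1| ≤ ε * 2 := by
        have : u p.1 - w p.1 = -(ε * (Tv p.1 - φ p.1)) := by simp only [hwdef]; ring
        rw [this, abs_neg, abs_mul, abs_of_nonneg hε.le]
        exact mul_le_mul_of_nonneg_left (hTvφb p.1) hε.le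
      linarith
    · refine Integrable.mono'
        (intOn_tail₂ hn hs0 hs1 hΩo hΩb hΩl (c := ε * 2) (by positivity))
        measG.aestronglyMeasurable ?_
      filter_upwards [ae_prod_fst (Ω := Ω) Ω hweq] with p hp
      simp only [hG]
      rw [hp]
      refine mynorm_div_le ?_ (by positivity)
      have h1 : |(|u p.1 - u p.2| - |u p.1 - w p.2|)| ≤ |u p.2 - w p.2| := by
        have := abs_abs_sub_abs_le_abs_sub (u p.1 - u p.2) (u p.1 - w p.2)
        have h0 : (u p.1 - u p.2) - (u p.1 - w p.2) = w p.2 - u p.2 := by ring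
        rw [h0] at this
        rw [abs_sub_comm (u p.2)]
        exact this
      have h2 : |u p.2 - w p.2| ≤ ε * 2 := by
        have : u p.2 - w p.2 = -(ε * (Tv p.2 - φ p.2)) := by simp only [hwdef]; ring
        rw [this, abs_neg, abs_mul, abs_of_nonneg hε.le]
        exact mul_le_mul_of_nonneg_left (hTvφb p.2) hε.le
      linarith
  -- conclusion
  calc ∫ p in QQ Ω, F p
      ≤ ∫ p in QQ Ω, F1 p := integral_mono_ae hFint hintF1 (ae_of_all _ hmono1)
    _ ≤ ∫ p in QQ Ω, ε⁻¹ * G p :=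
        integral_mono_ae hintF1 (hintG.const_mul _) (ae_of_all _ hmono2)
    _ = ε⁻¹ * ∫ p in QQ Ω, G p := integral_const_mul _ _
    _ ≤ 0 := by
        have h0 : ε⁻¹ * ∫ p in QQ Ω, G p ≤ ε⁻¹ * 0 :=
          mul_le_mul_of_nonneg_left hGle0 (inv_nonneg.mpr hε.le)
        simpa using h0
end
end

section
/- Let (u_k) be a sequence of measurable functions on ℝⁿ and u : ℝⁿ → ℝ be such that ‖u_k‖_{L^∞(ℝⁿ)} ≤ M for some M > 0 and all k, and u_k → u in L¹_loc(ℝⁿ) as k → +∞. Then 𝒯_s(u_k − u, Ω) → 0 as k → +∞. -/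
open MeasureTheory Set Filter Metric ENNReal

noncomputable section
set_option maxHeartbeats 1000000

namespace TailAux

variable {n : ℕ}

/-- The graph gap function for a chart. -/
def gfun (ν : Rn n) (ψ : Rn n → ℝ) (y : Rn n) : ℝ :=
  (inner ℝ y ν : ℝ) - ψ (y - (inner ℝ y ν : ℝ) • ν)

lemma proj_norm_le (ν : Rn n) (hν : ‖ν‖ = 1) (a b : Rn n) :
    ‖(a - (inner ℝ a ν : ℝ) • ν) - (b - (inner ℝ b ν : ℝ) • ν)‖ ≤ ‖a - b‖ := by
  set d := a - b with hd
  have hinner : (inner ℝ a ν : ℝ) - (inner ℝ b ν : ℝ) = (inner ℝ d ν : ℝ) := by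
    rw [hd, inner_sub_left]
  have hvec : (a - (inner ℝ a ν : ℝ) • ν) - (b - (inner ℝ b ν : ℝ) • ν)
      = d - (inner ℝ d ν : ℝ) • ν := by
    rw [← hinner, sub_smul, hd]; abel
  rw [hvec]
  have hsq : ‖d - (inner ℝ d ν : ℝ) • ν‖ ^ 2 = ‖d‖ ^ 2 - (inner ℝ d ν : ℝ) ^ 2 := by
    rw [norm_sub_sq_real]
    have h1 : (inner ℝ d ((inner ℝ d ν : ℝ) • ν) : ℝ) = (inner ℝ d ν : ℝ) ^ 2 := by
      rw [real_inner_smul_right]; ring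
    have h2 : ‖(inner ℝ d ν : ℝ) • ν‖ ^ 2 = (inner ℝ d ν : ℝ) ^ 2 := by
      rw [norm_smul, hν]; simp [sq_abs]
    rw [h1, h2]; ring
  have h3 : ‖d - (inner ℝ d ν : ℝ) • ν‖ ^ 2 ≤ ‖d‖ ^ 2 := by
    rw [hsq]; nlinarith [sq_nonneg (inner ℝ d ν : ℝ)]
  exact (pow_le_pow_iff_left₀ (norm_nonneg _) (norm_nonneg _) two_ne_zero).mp h3

lemma gfun_le (ν : Rn n) (hν : ‖ν‖ = 1) (L : NNReal) (ψ : Rn n → ℝ)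
    (hψ : LipschitzWith L ψ) (a b : Rn n) :
    gfun ν ψ a ≤ gfun ν ψ b + (1 + (L : ℝ)) * dist a b := by
  have h1 : (inner ℝ a ν : ℝ) - (inner ℝ b ν : ℝ) ≤ ‖a - b‖ := by
    rw [← inner_sub_left]
    calc (inner ℝ (a - b) ν : ℝ) ≤ ‖a - b‖ * ‖ν‖ := real_inner_le_norm _ _
    _ = ‖a - b‖ := by rw [hν, mul_one]
  have h2 : ψ (b - (inner ℝ b ν : ℝ) • ν) - ψ (a - (inner ℝ a ν : ℝ) • ν)
      ≤ (L : ℝ) * ‖a - b‖ := by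
    have := hψ.dist_le_mul (b - (inner ℝ b ν : ℝ) • ν) (a - (inner ℝ a ν : ℝ) • ν)
    rw [Real.dist_eq] at this
    have habs : ψ (b - (inner ℝ b ν : ℝ) • ν) - ψ (a - (inner ℝ a ν : ℝ) • ν)
        ≤ |ψ (b - (inner ℝ b ν : ℝ) • ν) - ψ (a - (inner ℝ a ν : ℝ) • ν)| := le_abs_self _
    refine habs.trans (this.trans ?_)
    have := proj_norm_le ν hν b a
    have hLn : (0:ℝ) ≤ L := L.2
    calc (L:ℝ) * dist (b - (inner ℝ b ν : ℝ) • ν) (a - (inner ℝ a ν : ℝ) • ν)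
        ≤ (L:ℝ) * ‖b - a‖ := by
          rw [dist_eq_norm]; exact mul_le_mul_of_nonneg_left this hLn
    _ = (L:ℝ) * ‖a - b‖ := by rw [norm_sub_rev]
  have hd : dist a b = ‖a - b‖ := dist_eq_norm a b
  have hLn : (0:ℝ) ≤ L := L.2
  simp only [gfun]
  nlinarith [norm_nonneg (a - b)]

lemma gfun_translate (ν : Rn n) (hν : ‖ν‖ = 1) (ψ : Rn n → ℝ) (y : Rn n) (c : ℝ) :
    gfun ν ψ (y + c • ν) = gfun ν ψ y + c := by
  have h1 : (inner ℝ (y + c • ν) ν : ℝ) = (inner ℝ y ν : ℝ) + c := by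
    rw [inner_add_left, real_inner_smul_left, real_inner_self_eq_norm_sq, hν]; ring
  have h2 : (y + c • ν) - ((inner ℝ y ν : ℝ) + c) • ν = y - (inner ℝ y ν : ℝ) • ν := by
    rw [add_smul]; abel
  simp only [gfun, h1, h2]; ring

lemma continuous_gfun (ν : Rn n) (ψ : Rn n → ℝ) (hψ : Continuous ψ) :
    Continuous (gfun ν ψ) := by
  have h1 : Continuous fun y : Rn n => (inner ℝ y ν : ℝ) :=
    continuous_id.inner continuous_const
  exact h1.sub (hψ.comp (continuous_id.sub (h1.smul continuous_const)))

/-- Slab volume estimate via disjoint translates. -/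
lemma slab_volume (ν : Rn n) (hν : ‖ν‖ = 1) (L : NNReal) (ψ : Rn n → ℝ)
    (hψ : LipschitzWith L ψ) (x₀ : Rn n) (r τ : ℝ) (hr : 0 < r) (hτ : 0 < τ) (hτr : τ ≤ r) :
    volume {y : Rn n | y ∈ ball x₀ r ∧ gfun ν ψ y ∈ Ioc 0 τ} * ENNReal.ofReal r
      ≤ volume (ball x₀ (2 * r)) * ENNReal.ofReal τ := by
  set g := gfun ν ψ with hg
  set S := {y : Rn n | y ∈ ball x₀ r ∧ g y ∈ Ioc 0 τ} with hS
  have hSm : MeasurableSet S := by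
    have : S = ball x₀ r ∩ g ⁻¹' (Ioc 0 τ) := rfl
    rw [this]
    exact measurableSet_ball.inter ((continuous_gfun ν ψ hψ.continuous).measurable
      measurableSet_Ioc)
  set N := Nat.floor (r / τ) + 1 with hN
  set T := fun j : ℕ => (fun y : Rn n => y + ((j : ℝ) * τ) • ν) ⁻¹' S with hT
  have hvolT : ∀ j, volume (T j) = volume S := fun j =>
    measure_preimage_add_right volume _ S
  have hTm : ∀ j, MeasurableSet (T j) := fun j =>
    hSm.preimage (measurable_id.add_const _)
  -- membership characterization
  have hmemT : ∀ j (y : Rn n), y ∈ T j ↔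
      (y + ((j:ℝ) * τ) • ν ∈ ball x₀ r ∧ g y + (j:ℝ) * τ ∈ Ioc 0 τ) := by
    intro j y
    simp only [hT, mem_preimage, hS, mem_setOf_eq]
    rw [hg, gfun_translate ν hν ψ y ((j:ℝ)*τ)]
  -- disjointness
  have hdisj : ∀ i j : ℕ, i < j → Disjoint (T i) (T j) := by
    intro i j hij
    rw [Set.disjoint_left]
    intro y hyi hyj
    have h1 := ((hmemT i y).mp hyi).2
    have h2 := ((hmemT j y).mp hyj).2
    have hij' : (i : ℝ) + 1 ≤ j := by exact_mod_cast hij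
    have key : ((i:ℝ)+1)*τ ≤ (j:ℝ)*τ := mul_le_mul_of_nonneg_right hij' hτ.le
    linarith [h1.1, h2.2]
  -- inclusion in the big ball
  have hsub : ∀ j < N, T j ⊆ ball x₀ (2 * r) := by
    intro j hj y hy
    obtain ⟨hb, -⟩ := (hmemT j y).mp hy
    have hjτ : (j : ℝ) * τ ≤ r := by
      have h1 : (j : ℝ) ≤ Nat.floor (r / τ) := by
        have : j ≤ Nat.floor (r / τ) := Nat.lt_succ_iff.mp hj
        exact_mod_cast this
      have h2 : (Nat.floor (r / τ) : ℝ) ≤ r / τ := Nat.floor_le (by positivity)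
      calc (j:ℝ) * τ ≤ (r / τ) * τ := by nlinarith
      _ = r := by field_simp
    have : dist y x₀ ≤ dist (y + ((j:ℝ)*τ) • ν) x₀ + (j:ℝ)*τ := by
      calc dist y x₀ ≤ dist y (y + ((j:ℝ)*τ) • ν) + dist (y + ((j:ℝ)*τ) • ν) x₀ :=
        dist_triangle _ _ _
      _ ≤ (j:ℝ)*τ + dist (y + ((j:ℝ)*τ) • ν) x₀ := by
          have heq : dist y (y + ((j:ℝ)*τ) • ν) = (j:ℝ)*τ := by
            rw [dist_eq_norm]
            have hv : y - (y + ((j:ℝ)*τ) • ν) = -(((j:ℝ)*τ) • ν) := by abel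
            rw [hv, norm_neg, norm_smul, hν, mul_one, Real.norm_eq_abs,
              abs_of_nonneg (by positivity)]
          rw [heq]
      _ = _ := by ring
    have hb' : dist (y + ((j:ℝ)*τ) • ν) x₀ < r := mem_ball.mp hb
    have : dist y x₀ < r + r := by nlinarith
    rw [mem_ball]
    linarith
  -- sum of volumes
  have hsum : (N : ℝ≥0∞) * volume S ≤ volume (ball x₀ (2 * r)) := by
    have hdisj' : (↑(Finset.range N) : Set ℕ).PairwiseDisjoint T := by
      intro i _ j _ hij
      rcases lt_or_gt_of_ne hij with h | h
      · exact hdisj i j h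
      · exact (hdisj j i h).symm
    have hbu := measure_biUnion_finset (μ := volume) hdisj' (fun j _ => hTm j)
    have hle : volume (⋃ j ∈ Finset.range N, T j) ≤ volume (ball x₀ (2 * r)) := by
      refine measure_mono ?_
      refine Set.iUnion₂_subset ?_
      intro j hj
      exact hsub j (Finset.mem_range.mp hj)
    rw [hbu] at hle
    calc (N : ℝ≥0∞) * volume S
        = ∑ j ∈ Finset.range N, volume (T j) := by
          simp only [hvolT, Finset.sum_const, Finset.card_range, nsmul_eq_mul]
      _ ≤ _ := hle
  -- conclude
  have hrN : ENNReal.ofReal r ≤ (N : ℝ≥0∞) * ENNReal.ofReal τ := by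
    have h1 : r < (N : ℝ) * τ := by
      have := Nat.lt_floor_add_one (r / τ)
      have : r / τ < (N : ℝ) := by exact_mod_cast Nat.lt_floor_add_one (r / τ)
      calc r = (r / τ) * τ := by field_simp
      _ < (N:ℝ) * τ := by nlinarith
    calc ENNReal.ofReal r ≤ ENNReal.ofReal ((N:ℝ) * τ) := ENNReal.ofReal_le_ofReal h1.le
    _ = (N : ℝ≥0∞) * ENNReal.ofReal τ := by
        rw [ENNReal.ofReal_mul (by positivity), ENNReal.ofReal_natCast]
  calc volume S * ENNReal.ofReal r ≤ volume S * ((N : ℝ≥0∞) * ENNReal.ofReal τ) :=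
      mul_le_mul_right hrN _
  _ = ((N : ℝ≥0∞) * volume S) * ENNReal.ofReal τ := by ring
  _ ≤ volume (ball x₀ (2 * r)) * ENNReal.ofReal τ := mul_le_mul_left hsum _


/-- Main geometric lemma: frontier is null and boundary strips have linear volume. -/
lemma strip_bound (Ω : Set (Rn n)) (hΩo : IsOpen Ω) (hΩb : Bornology.IsBounded Ω)
    (hΩl : HasLipschitzBoundary Ω) (hne : Ω.Nonempty) (hnu : Ω ≠ univ) :
    volume (frontier Ω) = 0 ∧ ∃ C : ℝ≥0∞, C ≠ ⊤ ∧ ∃ δ₀ : ℝ, 0 < δ₀ ∧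
      ∀ δ : ℝ, 0 < δ → δ ≤ δ₀ →
        volume {x | x ∈ Ω ∧ infDist x Ωᶜ < δ} ≤ C * ENNReal.ofReal δ := by
  classical
  choose! r hr ν hν L ψ hψ hchart using hΩl
  -- compactness of the frontier
  have hfb : Bornology.IsBounded (frontier Ω) :=
    hΩb.closure.subset (frontier_subset_closure)
  have hfc : IsCompact (frontier Ω) :=
    Metric.isCompact_of_isClosed_isBounded isClosed_frontier hfb
  obtain ⟨t, htf, htc⟩ := hfc.elim_nhds_subcover (fun z => ball z (r z / 4))
    (fun z hz => ball_mem_nhds _ (by have := hr z hz; linarith))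
  have hfne : (frontier Ω).Nonempty := nonempty_frontier_iff.mpr ⟨hne, hnu⟩
  have htne : t.Nonempty := by
    rcases Finset.eq_empty_or_nonempty t with h | h
    · exfalso
      obtain ⟨z, hz⟩ := hfne
      have := htc hz
      simp [h] at this
    · exact h
  -- chart facts
  have fact1 : ∀ z₀ ∈ t, ∀ y ∈ ball z₀ (r z₀), y ∈ Ω → 0 < gfun (ν z₀) (ψ z₀) y := by
    intro z₀ hz₀ y hyb hyΩ
    have hch := hchart z₀ (htf z₀ hz₀)
    have : y ∈ Ω ∩ ball z₀ (r z₀) := ⟨hyΩ, hyb⟩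
    rw [hch] at this
    have := this.2
    simp only [gfun]
    linarith
  have fact2 : ∀ z₀ ∈ t, ∀ y ∈ ball z₀ (r z₀), y ∉ Ω → gfun (ν z₀) (ψ z₀) y ≤ 0 := by
    intro z₀ hz₀ y hyb hyΩ
    have hch := hchart z₀ (htf z₀ hz₀)
    by_contra h
    push_neg at h
    have : y ∈ Ω ∩ ball z₀ (r z₀) := by
      rw [hch]
      refine ⟨hyb, ?_⟩
      simp only [gfun] at h
      linarith
    exact hyΩ this.1
  have fact3 : ∀ z₀ ∈ t, ∀ y ∈ frontier Ω, y ∈ ball z₀ (r z₀) →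
      gfun (ν z₀) (ψ z₀) y = 0 := by
    intro z₀ hz₀ y hyf hyb
    have hynΩ : y ∉ Ω := by
      rw [hΩo.frontier_eq] at hyf
      exact hyf.2
    have hle := fact2 z₀ hz₀ y hyb hynΩ
    refine le_antisymm hle ?_
    by_contra h
    push_neg at h
    -- y ∈ closure Ω
    have hyc : y ∈ closure Ω := by
      rw [hΩo.frontier_eq] at hyf
      exact hyf.1
    have hL1 : (0:ℝ) < 1 + (L z₀ : ℝ) := by positivity
    set ε := min (r z₀ - dist y z₀) (-(gfun (ν z₀) (ψ z₀) y) / (1 + (L z₀:ℝ))) with hε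
    have hεpos : 0 < ε := by
      apply lt_min
      · exact sub_pos.mpr (mem_ball.mp hyb)
      · have hgneg : 0 < -(gfun (ν z₀) (ψ z₀) y) := by linarith
        exact div_pos hgneg (by positivity)
    obtain ⟨x, hxΩ, hxd⟩ := Metric.mem_closure_iff.mp hyc ε hεpos
    have hxb : x ∈ ball z₀ (r z₀) := by
      rw [mem_ball]
      calc dist x z₀ ≤ dist x y + dist y z₀ := dist_triangle _ _ _
      _ < ε + dist y z₀ := by rw [dist_comm x y]; linarith
      _ ≤ (r z₀ - dist y z₀) + dist y z₀ := by
          have := min_le_left (r z₀ - dist y z₀) (-(gfun (ν z₀) (ψ z₀) y) / (1 + (L z₀:ℝ)))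
          linarith
      _ = r z₀ := by ring
    have hgx : 0 < gfun (ν z₀) (ψ z₀) x := fact1 z₀ hz₀ x hxb hxΩ
    have hlip := gfun_le (ν z₀) (hν z₀ (htf z₀ hz₀)) (L z₀) (ψ z₀)
      (hψ z₀ (htf z₀ hz₀)) x y
    have hεle : ε ≤ -(gfun (ν z₀) (ψ z₀) y) / (1 + (L z₀:ℝ)) := min_le_right _ _
    have : (1 + (L z₀:ℝ)) * dist x y < (1 + (L z₀:ℝ)) * ε :=
      mul_lt_mul_of_pos_left (by rw [dist_comm]; exact hxd) hL1
    have h2 : (1 + (L z₀:ℝ)) * ε ≤ -(gfun (ν z₀) (ψ z₀) y) := by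
      rw [le_div_iff₀ hL1] at hεle
      linarith
    linarith
  -- the constant
  set C : ℝ≥0∞ := ∑ z₀ ∈ t, volume (ball z₀ (2 * r z₀)) * ENNReal.ofReal (1 + (L z₀:ℝ))
      * (ENNReal.ofReal (r z₀))⁻¹ with hC
  have hCfin : C ≠ ⊤ := by
    rw [hC]
    refine (ENNReal.sum_lt_top.mpr ?_).ne
    intro z₀ hz₀
    exact ENNReal.mul_lt_top (ENNReal.mul_lt_top measure_ball_lt_top ENNReal.ofReal_lt_top)
      (ENNReal.inv_lt_top.mpr (ENNReal.ofReal_pos.mpr (hr z₀ (htf z₀ hz₀)))) |>.trans_le le_top |>.trans_le le_rfl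
  -- slab bound in divided form
  have hslab : ∀ z₀ ∈ t, ∀ τ : ℝ, 0 < τ → τ ≤ r z₀ →
      volume {y : Rn n | y ∈ ball z₀ (r z₀) ∧ gfun (ν z₀) (ψ z₀) y ∈ Ioc 0 τ}
        ≤ volume (ball z₀ (2 * r z₀)) * (ENNReal.ofReal (r z₀))⁻¹ * ENNReal.ofReal τ := by
    intro z₀ hz₀ τ hτ hτr
    have hrz := hr z₀ (htf z₀ hz₀)
    have := slab_volume (ν z₀) (hν z₀ (htf z₀ hz₀)) (L z₀) (ψ z₀)
      (hψ z₀ (htf z₀ hz₀)) z₀ (r z₀) τ hrz hτ hτr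
    have hrne : ENNReal.ofReal (r z₀) ≠ 0 := (ENNReal.ofReal_pos.mpr hrz).ne'
    have hrnt : ENNReal.ofReal (r z₀) ≠ ⊤ := ENNReal.ofReal_ne_top
    have h2 := (ENNReal.le_div_iff_mul_le (Or.inl hrne) (Or.inl hrnt)).mpr this
    calc volume {y : Rn n | y ∈ ball z₀ (r z₀) ∧ gfun (ν z₀) (ψ z₀) y ∈ Ioc 0 τ}
        ≤ volume (ball z₀ (2 * r z₀)) * ENNReal.ofReal τ / ENNReal.ofReal (r z₀) := h2
      _ = volume (ball z₀ (2 * r z₀)) * (ENNReal.ofReal (r z₀))⁻¹ * ENNReal.ofReal τ := by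
          rw [div_eq_mul_inv, mul_right_comm]
  constructor
  · -- frontier is null
    have hpiece : ∀ z₀ ∈ t, volume (frontier Ω ∩ ball z₀ (r z₀ / 4)) = 0 := by
      intro z₀ hz₀
      have hrz := hr z₀ (htf z₀ hz₀)
      set F := frontier Ω ∩ ball z₀ (r z₀ / 4) with hF
      have key : ∀ m : ℕ, volume F * ENNReal.ofReal (r z₀)
          ≤ volume (ball z₀ (2 * r z₀)) * ENNReal.ofReal ((r z₀ / 2) / ((m:ℝ)+1)) := by
        intro m
        set τ := (r z₀ / 2) / ((m:ℝ)+1) with hτdef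
        have hm1 : (1:ℝ) ≤ (m:ℝ)+1 := by
          have : (0:ℝ) ≤ (m:ℝ) := Nat.cast_nonneg m
          linarith
        have hτpos : 0 < τ := by positivity
        have hτle : τ ≤ r z₀ / 2 := by
          rw [hτdef, div_le_iff₀ (by linarith : (0:ℝ) < (m:ℝ)+1)]
          nlinarith [hrz]
        have hτler : τ ≤ r z₀ := by linarith
        have hsubF : F ⊆ (fun y : Rn n => y + τ • ν z₀) ⁻¹'
            {y : Rn n | y ∈ ball z₀ (r z₀) ∧ gfun (ν z₀) (ψ z₀) y ∈ Ioc 0 τ} := by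
          intro y hy
          obtain ⟨hyf, hyb4⟩ := hy
          have hyb : y ∈ ball z₀ (r z₀) := by
            rw [mem_ball] at hyb4 ⊢
            linarith
          have hg0 : gfun (ν z₀) (ψ z₀) y = 0 := fact3 z₀ hz₀ y hyf hyb
          constructor
          · rw [mem_ball]
            have hnorm : dist (y + τ • ν z₀) y = τ := by
              rw [dist_eq_norm]
              have hv : y + τ • ν z₀ - y = τ • ν z₀ := by abel
              rw [hv, norm_smul, hν z₀ (htf z₀ hz₀), mul_one, Real.norm_eq_abs,
                abs_of_pos hτpos]
            calc dist (y + τ • ν z₀) z₀ ≤ dist (y + τ • ν z₀) y + dist y z₀ :=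
                dist_triangle _ _ _
              _ < τ + r z₀ / 4 := by
                  rw [hnorm]
                  have := mem_ball.mp hyb4
                  linarith
              _ ≤ r z₀ := by linarith
          · rw [gfun_translate (ν z₀) (hν z₀ (htf z₀ hz₀)) (ψ z₀) y τ, hg0, zero_add]
            exact ⟨hτpos, le_refl τ⟩
        have h1 : volume F ≤
            volume {y : Rn n | y ∈ ball z₀ (r z₀) ∧ gfun (ν z₀) (ψ z₀) y ∈ Ioc 0 τ} := by
          calc volume F ≤ volume ((fun y : Rn n => y + τ • ν z₀) ⁻¹'
              {y : Rn n | y ∈ ball z₀ (r z₀) ∧ gfun (ν z₀) (ψ z₀) y ∈ Ioc 0 τ}) :=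
              measure_mono hsubF
            _ = _ := measure_preimage_add_right volume _ _
        calc volume F * ENNReal.ofReal (r z₀)
            ≤ volume {y : Rn n | y ∈ ball z₀ (r z₀) ∧ gfun (ν z₀) (ψ z₀) y ∈ Ioc 0 τ}
              * ENNReal.ofReal (r z₀) := mul_le_mul_left h1 _
          _ ≤ volume (ball z₀ (2 * r z₀)) * ENNReal.ofReal τ :=
              slab_volume (ν z₀) (hν z₀ (htf z₀ hz₀)) (L z₀) (ψ z₀)
                (hψ z₀ (htf z₀ hz₀)) z₀ (r z₀) τ hrz hτpos hτler
      -- take the limit m → ∞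
      have hlim : Tendsto (fun m : ℕ =>
          volume (ball z₀ (2 * r z₀)) * ENNReal.ofReal ((r z₀ / 2) / ((m:ℝ)+1)))
          atTop (nhds 0) := by
        have hseq : Tendsto (fun m : ℕ => (r z₀ / 2) / ((m:ℝ)+1)) atTop (nhds 0) := by
          have h0 : Tendsto (fun m : ℕ => 1 / ((m : ℝ) + 1)) atTop (nhds 0) :=
            tendsto_one_div_add_atTop_nhds_zero_nat
          have h1 := h0.const_mul (r z₀ / 2)
          rw [mul_zero] at h1
          convert h1 using 2 with m
          rw [mul_one_div]
        have h2 : Tendsto (fun m : ℕ => ENNReal.ofReal ((r z₀ / 2) / ((m:ℝ)+1)))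
            atTop (nhds 0) := by
          have := ENNReal.tendsto_ofReal (f := atTop) hseq
          simpa using this
        have h3 := ENNReal.Tendsto.const_mul h2
          (Or.inr (measure_ball_lt_top (μ := (volume : Measure (Rn n))) (x := z₀)
            (r := 2 * r z₀)).ne)
        rw [mul_zero] at h3
        exact h3
      have hle0 : volume F * ENNReal.ofReal (r z₀) ≤ 0 := ge_of_tendsto' hlim key
      have : volume F * ENNReal.ofReal (r z₀) = 0 := le_antisymm hle0 zero_le
      rcases mul_eq_zero.mp this with h | h
      · exact h
      · exact absurd h (ENNReal.ofReal_pos.mpr hrz).ne'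
    -- union over the cover
    have hcov2 : frontier Ω ⊆ ⋃ z₀ ∈ t, frontier Ω ∩ ball z₀ (r z₀ / 4) := by
      intro z hz
      obtain ⟨z₀, hz₀⟩ := mem_iUnion.mp (htc hz)
      obtain ⟨hz₀t, hzb⟩ := mem_iUnion.mp hz₀
      exact mem_iUnion.mpr ⟨z₀, mem_iUnion.mpr ⟨hz₀t, hz, hzb⟩⟩
    refine measure_mono_null hcov2 ?_
    refine le_antisymm ?_ zero_le
    calc volume (⋃ z₀ ∈ t, frontier Ω ∩ ball z₀ (r z₀ / 4))
        ≤ ∑ z₀ ∈ t, volume (frontier Ω ∩ ball z₀ (r z₀ / 4)) := measure_biUnion_finset_le t _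
      _ = 0 := Finset.sum_eq_zero hpiece
  · -- strip bound
    refine ⟨C, hCfin, t.inf' htne (fun z₀ => min (r z₀ / 4) (r z₀ / (1 + (L z₀:ℝ)))), ?_, ?_⟩
    · rw [Finset.lt_inf'_iff]
      intro z₀ hz₀
      have hrz := hr z₀ (htf z₀ hz₀)
      exact lt_min (by linarith) (by positivity)
    · intro δ hδ hδ0
      set δ₀ := t.inf' htne (fun z₀ => min (r z₀ / 4) (r z₀ / (1 + (L z₀:ℝ)))) with hδ₀
      have hsubstrip : {x | x ∈ Ω ∧ infDist x Ωᶜ < δ} ⊆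
          ⋃ z₀ ∈ t, {y : Rn n | y ∈ ball z₀ (r z₀) ∧
            gfun (ν z₀) (ψ z₀) y ∈ Ioc 0 ((1 + (L z₀:ℝ)) * δ)} := by
        rintro x ⟨hxΩ, hxd⟩
        obtain ⟨z, hzf, hzd⟩ := exists_mem_frontier_infDist_compl_eq_dist hxΩ hnu
        have hdxz : dist x z < δ := by rw [← hzd]; exact hxd
        obtain ⟨z₀, hz₀⟩ := mem_iUnion.mp (htc hzf)
        obtain ⟨hz₀t, hzb⟩ := mem_iUnion.mp hz₀
        have hrz := hr z₀ (htf z₀ hz₀t)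
        have hL1 : (0:ℝ) < 1 + (L z₀ : ℝ) := by positivity
        have hδle : δ ≤ min (r z₀ / 4) (r z₀ / (1 + (L z₀:ℝ))) :=
          hδ0.trans (Finset.inf'_le _ hz₀t)
        have hδ4 : δ ≤ r z₀ / 4 := hδle.trans (min_le_left _ _)
        have hδL : (1 + (L z₀:ℝ)) * δ ≤ r z₀ := by
          have := hδle.trans (min_le_right _ _)
          rw [le_div_iff₀ hL1] at this
          linarith
        have hzb' : dist z z₀ < r z₀ / 4 := mem_ball.mp hzb
        have hxb : x ∈ ball z₀ (r z₀) := by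
          rw [mem_ball]
          calc dist x z₀ ≤ dist x z + dist z z₀ := dist_triangle _ _ _
            _ < δ + r z₀ / 4 := by linarith
            _ ≤ r z₀ := by linarith
        have hzball : z ∈ ball z₀ (r z₀) := by
          rw [mem_ball]; linarith
        have hznΩ : z ∉ Ω := by
          rw [hΩo.frontier_eq] at hzf
          exact hzf.2
        have hgx : 0 < gfun (ν z₀) (ψ z₀) x := fact1 z₀ hz₀t x hxb hxΩ
        have hgz : gfun (ν z₀) (ψ z₀) z ≤ 0 := fact2 z₀ hz₀t z hzball hznΩ
        have hlip := gfun_le (ν z₀) (hν z₀ (htf z₀ hz₀t)) (L z₀) (ψ z₀)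
          (hψ z₀ (htf z₀ hz₀t)) x z
        have hgxle : gfun (ν z₀) (ψ z₀) x ≤ (1 + (L z₀:ℝ)) * δ := by
          have h1 : (1 + (L z₀:ℝ)) * dist x z ≤ (1 + (L z₀:ℝ)) * δ :=
            mul_le_mul_of_nonneg_left hdxz.le hL1.le
          linarith
        exact mem_iUnion.mpr ⟨z₀, mem_iUnion.mpr ⟨hz₀t, hxb, hgx, hgxle⟩⟩
      calc volume {x | x ∈ Ω ∧ infDist x Ωᶜ < δ}
          ≤ volume (⋃ z₀ ∈ t, {y : Rn n | y ∈ ball z₀ (r z₀) ∧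
              gfun (ν z₀) (ψ z₀) y ∈ Ioc 0 ((1 + (L z₀:ℝ)) * δ)}) := measure_mono hsubstrip
        _ ≤ ∑ z₀ ∈ t, volume {y : Rn n | y ∈ ball z₀ (r z₀) ∧
              gfun (ν z₀) (ψ z₀) y ∈ Ioc 0 ((1 + (L z₀:ℝ)) * δ)} := measure_biUnion_finset_le t _
        _ ≤ ∑ z₀ ∈ t, volume (ball z₀ (2 * r z₀)) * ENNReal.ofReal (1 + (L z₀:ℝ))
              * (ENNReal.ofReal (r z₀))⁻¹ * ENNReal.ofReal δ := by
            refine Finset.sum_le_sum ?_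
            intro z₀ hz₀t
            have hrz := hr z₀ (htf z₀ hz₀t)
            have hL1 : (0:ℝ) < 1 + (L z₀ : ℝ) := by positivity
            have hδle : δ ≤ min (r z₀ / 4) (r z₀ / (1 + (L z₀:ℝ))) :=
              hδ0.trans (Finset.inf'_le _ hz₀t)
            have hδL : (1 + (L z₀:ℝ)) * δ ≤ r z₀ := by
              have := hδle.trans (min_le_right _ _)
              rw [le_div_iff₀ hL1] at this
              linarith
            have := hslab z₀ hz₀t ((1 + (L z₀:ℝ)) * δ) (by positivity) hδL
            calc volume {y : Rn n | y ∈ ball z₀ (r z₀) ∧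
                  gfun (ν z₀) (ψ z₀) y ∈ Ioc 0 ((1 + (L z₀:ℝ)) * δ)}
                ≤ volume (ball z₀ (2 * r z₀)) * (ENNReal.ofReal (r z₀))⁻¹
                  * ENNReal.ofReal ((1 + (L z₀:ℝ)) * δ) := this
              _ = volume (ball z₀ (2 * r z₀)) * ENNReal.ofReal (1 + (L z₀:ℝ))
                  * (ENNReal.ofReal (r z₀))⁻¹ * ENNReal.ofReal δ := by
                  rw [ENNReal.ofReal_mul hL1.le]
                  ring
        _ = C * ENNReal.ofReal δ := by
            rw [hC, Finset.sum_mul]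

/-- The constant in the kernel tail bound. -/
def kconst (n : ℕ) (s : ℝ) : ℝ≥0∞ :=
  volume (ball (0 : Rn n) 1) * ENNReal.ofReal (((n:ℝ) + s) / s)

lemma kconst_ne_top (n : ℕ) (s : ℝ) : kconst n s ≠ ⊤ :=
  (ENNReal.mul_lt_top measure_ball_lt_top ENNReal.ofReal_lt_top).ne

lemma kernel_tail_bound (n : ℕ) (hn : 1 ≤ n) (s : ℝ) (hs : s ∈ Ioo (0:ℝ) 1)
    (x₀ : Rn n) (ρ : ℝ) (hρ : 0 < ρ) :
    ∫⁻ y in (ball x₀ ρ)ᶜ, ENNReal.ofReal ((dist x₀ y ^ ((n:ℝ) + s))⁻¹)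
      ≤ kconst n s * ENNReal.ofReal (ρ ^ (-s)) := by
  haveI : Nonempty (Fin n) := ⟨⟨0, hn⟩⟩
  set p : ℝ := (n:ℝ) + s with hpdef
  have hp : 0 < p := by
    have : (0:ℝ) ≤ (n:ℝ) := Nat.cast_nonneg n
    have := hs.1
    simp only [hpdef]; linarith
  set a : ℝ := (n:ℝ) / p with hadef
  have ha1 : a < 1 := by
    rw [hadef, div_lt_one hp]
    simp only [hpdef]; linarith [hs.1]
  have ha0 : 0 ≤ a := by positivity
  set f : Rn n → ℝ := fun y => (dist x₀ y ^ p)⁻¹ with hfdef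
  have hmf : Measurable f := by
    have h1 : Measurable fun y : Rn n => dist x₀ y := measurable_const.dist measurable_id
    exact ((Real.continuous_rpow_const hp.le).measurable.comp h1).inv
  set μ := volume.restrict (ball x₀ ρ)ᶜ with hμ
  have hlc := lintegral_eq_lintegral_meas_lt μ
    (Eventually.of_forall fun y => by positivity) hmf.aemeasurable
  set T : ℝ := ρ ^ (-p) with hTdef
  have hT : 0 < T := Real.rpow_pos_of_pos hρ _
  -- measure of superlevel sets
  have hlevel0 : ∀ t : ℝ, T ≤ t → μ {y | t < f y} = 0 := by
    intro t hTt
    have : {y : Rn n | t < f y} ∩ (ball x₀ ρ)ᶜ = ∅ := by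
      ext y
      simp only [mem_inter_iff, mem_setOf_eq, mem_compl_iff, mem_ball, not_lt, mem_empty_iff_false,
        iff_false, not_and]
      intro hty hdy
      have hd : ρ ≤ dist x₀ y := by rwa [dist_comm]
      have h1 : ρ ^ p ≤ dist x₀ y ^ p := Real.rpow_le_rpow hρ.le hd hp.le
      have h2 : f y ≤ (ρ ^ p)⁻¹ := by
        apply inv_anti₀ (Real.rpow_pos_of_pos hρ _) h1
      have h3 : (ρ ^ p)⁻¹ = T := by
        rw [hTdef, Real.rpow_neg hρ.le]
      linarith [h2, h3 ▸ h2]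
    have hms : MeasurableSet {y : Rn n | t < f y} := measurableSet_lt measurable_const hmf
    rw [hμ, Measure.restrict_apply hms, this, measure_empty]
  have hlevel1 : ∀ t : ℝ, 0 < t →
      μ {y | t < f y} ≤ ENNReal.ofReal (t ^ (-a)) * volume (ball (0:Rn n) 1) := by
    intro t ht
    have hms : MeasurableSet {y : Rn n | t < f y} := measurableSet_lt measurable_const hmf
    rw [hμ, Measure.restrict_apply hms]
    set R : ℝ := (t⁻¹) ^ p⁻¹ with hRdef
    have hR0 : 0 ≤ R := Real.rpow_nonneg (by positivity) _
    have hsub : {y : Rn n | t < f y} ∩ (ball x₀ ρ)ᶜ ⊆ ball x₀ R := by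
      rintro y ⟨hty, -⟩
      simp only [mem_setOf_eq, hfdef] at hty
      have hd0 : 0 ≤ dist x₀ y := dist_nonneg
      have hdp : dist x₀ y ^ p < t⁻¹ := by
        by_cases hz : dist x₀ y ^ p = 0
        · rw [hz]; positivity
        · have hzpos : 0 < dist x₀ y ^ p :=
            lt_of_le_of_ne (Real.rpow_nonneg hd0 _) (Ne.symm hz)
          exact (lt_inv_comm₀ ht hzpos).mp hty
      have : dist x₀ y < R := by
        calc dist x₀ y = (dist x₀ y ^ p) ^ p⁻¹ := by
              rw [Real.rpow_rpow_inv hd0 hp.ne']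
          _ < R := by
              rw [hRdef]
              exact Real.rpow_lt_rpow (Real.rpow_nonneg hd0 _) hdp (by positivity)
      rw [mem_ball, dist_comm]
      exact this
    calc volume ({y : Rn n | t < f y} ∩ (ball x₀ ρ)ᶜ) ≤ volume (ball x₀ R) :=
        measure_mono hsub
      _ = ENNReal.ofReal (R ^ n) * volume (ball (0:Rn n) 1) := by
          rw [Measure.addHaar_ball volume x₀ hR0, finrank_euclideanSpace_fin]
      _ = ENNReal.ofReal (t ^ (-a)) * volume (ball (0:Rn n) 1) := by
          congr 1
          rw [hRdef, ← Real.rpow_natCast ((t⁻¹) ^ p⁻¹) n,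
            ← Real.rpow_mul (by positivity : (0:ℝ) ≤ t⁻¹), Real.inv_rpow ht.le,
            ← Real.rpow_neg ht.le]
          congr 1
          rw [hadef]; ring
  have hcont : ContinuousOn (fun t : ℝ => t ^ (-a)) (Ioc 0 T) := fun t ht =>
    (Real.continuousAt_rpow_const t (-a) (Or.inl (ne_of_gt ht.1))).continuousWithinAt
  have haem : AEMeasurable (fun t : ℝ => ENNReal.ofReal (t ^ (-a)))
      (volume.restrict (Ioc 0 T)) :=
    ENNReal.measurable_ofReal.comp_aemeasurable (hcont.aemeasurable measurableSet_Ioc)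
  have hint : IntegrableOn (fun t : ℝ => t ^ (-a)) (Ioc 0 T) := by
    have h1 : IntervalIntegrable (fun t : ℝ => t ^ (-a)) volume 0 T :=
      intervalIntegral.intervalIntegrable_rpow' (by linarith)
    rw [intervalIntegrable_iff, uIoc_of_le hT.le] at h1
    exact h1
  have hval : ∫ t in Ioc 0 T, t ^ (-a) = T ^ (1 - a) / (1 - a) := by
    rw [← intervalIntegral.integral_of_le hT.le]
    rw [integral_rpow (Or.inl (by linarith : (-1:ℝ) < -a))]
    rw [Real.zero_rpow (by linarith : -a + 1 ≠ 0)]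
    norm_num
    congr 1
    · ring_nf
    · ring
  have h2nd : ∫⁻ t in Ioi T, μ {a | t < f a} = 0 := by
    calc ∫⁻ t in Ioi T, μ {a | t < f a} = ∫⁻ _ in Ioi T, (0:ℝ≥0∞) :=
        setLIntegral_congr_fun measurableSet_Ioi
          (fun t ht => hlevel0 t (le_of_lt ht))
      _ = 0 := by simp
  have h1st : ∫⁻ t in Ioc 0 T, μ {a | t < f a}
      ≤ ENNReal.ofReal (T ^ (1 - a) / (1 - a)) * volume (ball (0:Rn n) 1) := by
    calc ∫⁻ t in Ioc 0 T, μ {a | t < f a}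
        ≤ ∫⁻ t in Ioc 0 T, ENNReal.ofReal (t ^ (-a)) * volume (ball (0:Rn n) 1) :=
          setLIntegral_mono' measurableSet_Ioc (fun t ht => hlevel1 t ht.1)
      _ = (∫⁻ t in Ioc 0 T, ENNReal.ofReal (t ^ (-a))) * volume (ball (0:Rn n) 1) :=
          lintegral_mul_const'' _ haem
      _ = ENNReal.ofReal (∫ t in Ioc 0 T, t ^ (-a)) * volume (ball (0:Rn n) 1) := by
          rw [ofReal_integral_eq_lintegral_ofReal hint
            ((ae_restrict_iff' measurableSet_Ioc).mpr
              (ae_of_all _ fun t ht => Real.rpow_nonneg ht.1.le _))]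
      _ = ENNReal.ofReal (T ^ (1 - a) / (1 - a)) * volume (ball (0:Rn n) 1) := by
          rw [hval]
  have hfinal : ENNReal.ofReal (T ^ (1 - a) / (1 - a)) * volume (ball (0:Rn n) 1)
      ≤ kconst n s * ENNReal.ofReal (ρ ^ (-s)) := by
    have hTpow : T ^ (1 - a) = ρ ^ (-s) := by
      rw [hTdef, ← Real.rpow_mul hρ.le]
      congr 1
      have hpa : p * a = (n:ℝ) := by
        rw [hadef]; field_simp
      have : -p * (1 - a) = -p + p * a := by ring
      rw [this, hpa]
      simp only [hpdef]; ring
    have h1a : 1 - a = s / p := by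
      rw [hadef]
      field_simp
      simp only [hpdef]; ring
    have hdiv : T ^ (1 - a) / (1 - a) = ρ ^ (-s) * (p / s) := by
      rw [hTpow, h1a, div_div_eq_mul_div]
      ring
    rw [hdiv, ENNReal.ofReal_mul (Real.rpow_nonneg hρ.le _)]
    rw [kconst]
    calc ENNReal.ofReal (ρ ^ (-s)) * ENNReal.ofReal (p / s) * volume (ball (0:Rn n) 1)
        = volume (ball (0:Rn n) 1) * ENNReal.ofReal (((n:ℝ) + s) / s)
          * ENNReal.ofReal (ρ ^ (-s)) := by rw [hpdef]; ring
      _ ≤ _ := le_rfl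
  calc ∫⁻ y in (ball x₀ ρ)ᶜ, ENNReal.ofReal ((dist x₀ y ^ ((n:ℝ) + s))⁻¹)
      = ∫⁻ t in Ioi (0:ℝ), μ {a | t < f a} := hlc
    _ = ∫⁻ t in Ioc 0 T ∪ Ioi T, μ {a | t < f a} := by
        rw [Ioc_union_Ioi_eq_Ioi hT.le]
    _ = (∫⁻ t in Ioc 0 T, μ {a | t < f a}) + ∫⁻ t in Ioi T, μ {a | t < f a} := by
        rw [lintegral_union measurableSet_Ioi (Ioc_disjoint_Ioi le_rfl)]
    _ ≤ ENNReal.ofReal (T ^ (1 - a) / (1 - a)) * volume (ball (0:Rn n) 1) + 0 := by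
        exact add_le_add h1st h2nd.le
    _ = ENNReal.ofReal (T ^ (1 - a) / (1 - a)) * volume (ball (0:Rn n) 1) := by rw [add_zero]
    _ ≤ kconst n s * ENNReal.ofReal (ρ ^ (-s)) := hfinal


lemma dsum_lt_top (s : ℝ) (hs : s ∈ Ioo (0:ℝ) 1) (Ω : Set (Rn n)) (hΩo : IsOpen Ω)
    (hΩb : Bornology.IsBounded Ω) (hcne : Ωᶜ.Nonempty)
    (C : ℝ≥0∞) (hC : C ≠ ⊤) (δ₀ : ℝ) (hδ₀ : 0 < δ₀)
    (hstrip : ∀ δ : ℝ, 0 < δ → δ ≤ δ₀ →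
      volume {x | x ∈ Ω ∧ infDist x Ωᶜ < δ} ≤ C * ENNReal.ofReal δ) :
    ∫⁻ x in Ω, ENNReal.ofReal ((infDist x Ωᶜ) ^ (-s)) < ⊤ := by
  have hΩm : MeasurableSet Ω := hΩo.measurableSet
  set d : Rn n → ℝ := fun x => infDist x Ωᶜ with hd
  have hdc : Continuous d := continuous_infDist_pt Ωᶜ
  have hdpos : ∀ x ∈ Ω, 0 < d x := by
    intro x hx
    exact (IsClosed.notMem_iff_infDist_pos hΩo.isClosed_compl hcne).mp (by simpa using hx)
  set B : Set (Rn n) := Ω ∩ {x | δ₀ ≤ d x} with hB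
  set T : ℕ → Set (Rn n) :=
    fun j => {x | x ∈ Ω ∧ δ₀ * (2⁻¹:ℝ)^(j+1) ≤ d x ∧ d x < δ₀ * (2⁻¹:ℝ)^j} with hT
  have hBm : MeasurableSet B := hΩm.inter (measurableSet_le measurable_const hdc.measurable)
  have hTm : ∀ j, MeasurableSet (T j) := by
    intro j
    have : T j = Ω ∩ ({x | δ₀ * (2⁻¹:ℝ)^(j+1) ≤ d x} ∩ {x | d x < δ₀ * (2⁻¹:ℝ)^j}) := by
      ext x
      simp only [hT, mem_setOf_eq, mem_inter_iff, and_assoc]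
    rw [this]
    exact hΩm.inter ((measurableSet_le measurable_const hdc.measurable).inter
      (measurableSet_lt hdc.measurable measurable_const))
  have hcover : Ω ⊆ B ∪ ⋃ j, T j := by
    intro x hx
    rcases le_or_gt δ₀ (d x) with h | h
    · exact Or.inl ⟨hx, h⟩
    · refine Or.inr ?_
      have hdx := hdpos x hx
      have hex : ∃ m : ℕ, δ₀ * (2⁻¹:ℝ)^m ≤ d x := by
        obtain ⟨m, hm⟩ := exists_pow_lt_of_lt_one (div_pos hdx hδ₀) (by norm_num : (2⁻¹:ℝ) < 1)
        exact ⟨m, by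
          have := (lt_div_iff₀' hδ₀).mp hm
          linarith⟩
      classical
      set m₀ := Nat.find hex with hm₀
      have hm₀spec : δ₀ * (2⁻¹:ℝ)^m₀ ≤ d x := Nat.find_spec hex
      have hm₀pos : m₀ ≠ 0 := by
        intro h0
        rw [h0] at hm₀spec
        simp at hm₀spec
        linarith
      obtain ⟨j, hj⟩ := Nat.exists_eq_succ_of_ne_zero hm₀pos
      refine mem_iUnion.mpr ⟨j, hx, ?_, ?_⟩
      · rw [← Nat.succ_eq_add_one, ← hj]; exact hm₀spec
      · have := Nat.find_min hex (m := j) (by omega)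
        push_neg at this
        exact this
  have hub : ∫⁻ x in Ω, ENNReal.ofReal (d x ^ (-s))
      ≤ (∫⁻ x in B, ENNReal.ofReal (d x ^ (-s)))
        + ∑' j, ∫⁻ x in T j, ENNReal.ofReal (d x ^ (-s)) := by
    calc ∫⁻ x in Ω, ENNReal.ofReal (d x ^ (-s))
        ≤ ∫⁻ x in B ∪ ⋃ j, T j, ENNReal.ofReal (d x ^ (-s)) := lintegral_mono_set hcover
      _ ≤ (∫⁻ x in B, ENNReal.ofReal (d x ^ (-s)))
          + ∫⁻ x in ⋃ j, T j, ENNReal.ofReal (d x ^ (-s)) := lintegral_union_le _ _ _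
      _ ≤ _ := by
          gcongr
          exact lintegral_iUnion_le _ _
  -- bound on B
  have hBbound : ∫⁻ x in B, ENNReal.ofReal (d x ^ (-s))
      ≤ ENNReal.ofReal (δ₀ ^ (-s)) * volume Ω := by
    calc ∫⁻ x in B, ENNReal.ofReal (d x ^ (-s))
        ≤ ∫⁻ _x in B, ENNReal.ofReal (δ₀ ^ (-s)) := by
          refine setLIntegral_mono' hBm ?_
          rintro x ⟨hxΩ, hxd⟩
          exact ENNReal.ofReal_le_ofReal
            (Real.rpow_le_rpow_of_nonpos hδ₀ hxd (by linarith [hs.1]))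
      _ = ENNReal.ofReal (δ₀ ^ (-s)) * volume B := setLIntegral_const _ _
      _ ≤ ENNReal.ofReal (δ₀ ^ (-s)) * volume Ω := by
          gcongr
          exact inter_subset_left
  -- bound on T j
  have hreal : ∀ j : ℕ, ((δ₀ * (2⁻¹:ℝ)^(j+1)) ^ (-s)) * (δ₀ * (2⁻¹:ℝ)^j)
      = (δ₀ ^ (1-s) * (2:ℝ)^s) * ((2:ℝ)^(s-1))^j := by
    intro j
    have h2 : ∀ m : ℕ, ((2⁻¹:ℝ))^m = (2:ℝ)^(-(m:ℝ)) := by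
      intro m
      rw [inv_pow, ← Real.rpow_natCast (2:ℝ) m, ← Real.rpow_neg (by norm_num)]
    have e1 : (δ₀:ℝ)^(1-s) = δ₀^(-s) * δ₀ := by
      have := Real.rpow_add_one hδ₀.ne' (-s)
      rw [show (-s+1 : ℝ) = 1 - s by ring] at this
      exact this
    have e2 : ((2:ℝ)^(s-1))^j = (2:ℝ)^((s-1)*(j:ℝ)) := by
      rw [← Real.rpow_natCast ((2:ℝ)^(s-1)) j, ← Real.rpow_mul (by norm_num)]
    rw [h2 (j+1), h2 j,
      Real.mul_rpow hδ₀.le (Real.rpow_nonneg (by norm_num) _),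
      ← Real.rpow_mul (by norm_num : (0:ℝ) ≤ 2), e1, e2]
    push_cast
    rw [show δ₀ ^ (-s) * ((2:ℝ) ^ (-((j:ℝ) + 1) * -s)) * (δ₀ * (2:ℝ) ^ (-(j:ℝ)))
        = (δ₀ ^ (-s) * δ₀) * ((2:ℝ) ^ (-((j:ℝ) + 1) * -s) * (2:ℝ) ^ (-(j:ℝ))) by ring,
      ← Real.rpow_add (by norm_num : (0:ℝ) < 2),
      show δ₀ ^ (-s) * δ₀ * (2:ℝ) ^ s * ((2:ℝ) ^ ((s-1) * (j:ℝ)))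
        = (δ₀ ^ (-s) * δ₀) * ((2:ℝ) ^ s * (2:ℝ) ^ ((s-1) * (j:ℝ))) by ring,
      ← Real.rpow_add (by norm_num : (0:ℝ) < 2)]
    congr 1
    ring
  have hTbound : ∀ j : ℕ, ∫⁻ x in T j, ENNReal.ofReal (d x ^ (-s))
      ≤ C * ENNReal.ofReal (δ₀ ^ (1-s) * (2:ℝ)^s) * (ENNReal.ofReal ((2:ℝ)^(s-1)))^j := by
    intro j
    have hδj : (0:ℝ) < δ₀ * (2⁻¹:ℝ)^j := by positivity
    have hδj1 : (0:ℝ) < δ₀ * (2⁻¹:ℝ)^(j+1) := by positivity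
    have hvol : volume (T j) ≤ C * ENNReal.ofReal (δ₀ * (2⁻¹:ℝ)^j) := by
      have hsub : T j ⊆ {x | x ∈ Ω ∧ infDist x Ωᶜ < δ₀ * (2⁻¹:ℝ)^j} := by
        rintro x ⟨hxΩ, -, hxu⟩
        exact ⟨hxΩ, hxu⟩
      refine (measure_mono hsub).trans (hstrip _ hδj ?_)
      calc δ₀ * (2⁻¹:ℝ)^j ≤ δ₀ * 1 := by
            gcongr
            exact pow_le_one₀ (by norm_num) (by norm_num)
        _ = δ₀ := mul_one δ₀
    calc ∫⁻ x in T j, ENNReal.ofReal (d x ^ (-s))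
        ≤ ∫⁻ _x in T j, ENNReal.ofReal ((δ₀ * (2⁻¹:ℝ)^(j+1)) ^ (-s)) := by
          refine setLIntegral_mono' (hTm j) ?_
          rintro x ⟨hxΩ, hxl, -⟩
          exact ENNReal.ofReal_le_ofReal
            (Real.rpow_le_rpow_of_nonpos hδj1 hxl (by linarith [hs.1]))
      _ = ENNReal.ofReal ((δ₀ * (2⁻¹:ℝ)^(j+1)) ^ (-s)) * volume (T j) := setLIntegral_const _ _
      _ ≤ ENNReal.ofReal ((δ₀ * (2⁻¹:ℝ)^(j+1)) ^ (-s)) * (C * ENNReal.ofReal (δ₀ * (2⁻¹:ℝ)^j)) := by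
          gcongr
      _ = C * (ENNReal.ofReal ((δ₀ * (2⁻¹:ℝ)^(j+1)) ^ (-s)) * ENNReal.ofReal (δ₀ * (2⁻¹:ℝ)^j)) := by
          ring
      _ = C * ENNReal.ofReal (((δ₀ * (2⁻¹:ℝ)^(j+1)) ^ (-s)) * (δ₀ * (2⁻¹:ℝ)^j)) := by
          rw [ENNReal.ofReal_mul (Real.rpow_nonneg hδj1.le _)]
      _ = C * ENNReal.ofReal ((δ₀ ^ (1-s) * (2:ℝ)^s) * ((2:ℝ)^(s-1))^j) := by rw [hreal j]
      _ = C * ENNReal.ofReal (δ₀ ^ (1-s) * (2:ℝ)^s) * (ENNReal.ofReal ((2:ℝ)^(s-1)))^j := by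
          rw [ENNReal.ofReal_mul (by positivity),
            ENNReal.ofReal_pow (Real.rpow_nonneg (by norm_num) _), mul_assoc]
  -- geometric series
  have hq : ENNReal.ofReal ((2:ℝ)^(s-1)) < 1 := by
    rw [← ENNReal.ofReal_one]
    refine ENNReal.ofReal_lt_ofReal_iff_of_nonneg (Real.rpow_nonneg (by norm_num) _) |>.mpr ?_
    have : (2:ℝ)^(s-1) < (2:ℝ)^(0:ℝ) := by
      refine Real.rpow_lt_rpow_of_exponent_lt (by norm_num) (by linarith [hs.2])
    simpa using this
  have hsum : ∑' j, ∫⁻ x in T j, ENNReal.ofReal (d x ^ (-s))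
      ≤ C * ENNReal.ofReal (δ₀ ^ (1-s) * (2:ℝ)^s) * (1 - ENNReal.ofReal ((2:ℝ)^(s-1)))⁻¹ := by
    calc ∑' j, ∫⁻ x in T j, ENNReal.ofReal (d x ^ (-s))
        ≤ ∑' j, C * ENNReal.ofReal (δ₀ ^ (1-s) * (2:ℝ)^s) * (ENNReal.ofReal ((2:ℝ)^(s-1)))^j :=
          ENNReal.tsum_le_tsum hTbound
      _ = C * ENNReal.ofReal (δ₀ ^ (1-s) * (2:ℝ)^s) * ∑' j, (ENNReal.ofReal ((2:ℝ)^(s-1)))^j := by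
          rw [ENNReal.tsum_mul_left]
      _ = _ := by rw [ENNReal.tsum_geometric]
  have hfin1 : ENNReal.ofReal (δ₀ ^ (-s)) * volume Ω < ⊤ :=
    ENNReal.mul_lt_top ENNReal.ofReal_lt_top hΩb.measure_lt_top
  have hfin2 : C * ENNReal.ofReal (δ₀ ^ (1-s) * (2:ℝ)^s)
      * (1 - ENNReal.ofReal ((2:ℝ)^(s-1)))⁻¹ < ⊤ := by
    refine ENNReal.mul_lt_top (ENNReal.mul_lt_top hC.lt_top ENNReal.ofReal_lt_top) ?_
    rw [ENNReal.inv_lt_top]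
    exact tsub_pos_of_lt hq
  calc ∫⁻ x in Ω, ENNReal.ofReal (d x ^ (-s)) ≤ _ := hub
    _ ≤ ENNReal.ofReal (δ₀ ^ (-s)) * volume Ω
        + C * ENNReal.ofReal (δ₀ ^ (1-s) * (2:ℝ)^s) * (1 - ENNReal.ofReal ((2:ℝ)^(s-1)))⁻¹ :=
        add_le_add hBbound hsum
    _ < ⊤ := ENNReal.add_lt_top.mpr ⟨hfin1, hfin2⟩


lemma limit_bound (u : ℕ → Rn n → ℝ) (v : Rn n → ℝ) (hv : Measurable v) (M : ℝ)
    (hbd : ∀ k, ∀ᵐ x : Rn n ∂volume, |u k x| ≤ M)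
    (hloc : ∀ K : Set (Rn n), IsCompact K →
      Tendsto (fun k => ∫⁻ x in K, ENNReal.ofReal |u k x - v x|) atTop (nhds 0)) :
    ∀ᵐ x : Rn n ∂volume, |v x| ≤ M := by
  have hball : ∀ R : ℕ, ∀ᵐ x : Rn n ∂volume, x ∈ closedBall (0:Rn n) R → |v x| ≤ M := by
    intro R
    have hcomp : IsCompact (closedBall (0:Rn n) R) := isCompact_closedBall _ _
    set μR := volume.restrict (closedBall (0:Rn n) R) with hμR
    have hzero : ∫⁻ x, ENNReal.ofReal (|v x| - M) ∂μR = 0 := by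
      have hbound : ∀ k, ∫⁻ x, ENNReal.ofReal (|v x| - M) ∂μR
          ≤ ∫⁻ x in closedBall (0:Rn n) R, ENNReal.ofReal |u k x - v x| := by
        intro k
        have hae : ∀ᵐ x ∂μR, ENNReal.ofReal (|v x| - M) ≤ ENNReal.ofReal |u k x - v x| := by
          refine ae_restrict_of_ae ?_
          filter_upwards [hbd k] with x hx
          refine ENNReal.ofReal_le_ofReal ?_
          have h1 : |v x| - |u k x| ≤ |u k x - v x| := by
            have := abs_sub_abs_le_abs_sub (v x) (u k x)
            rw [abs_sub_comm] at this
            linarith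
          linarith
        exact lintegral_mono_ae hae
      have htend := hloc (closedBall (0:Rn n) R) hcomp
      by_contra h
      have hpos : 0 < ∫⁻ x, ENNReal.ofReal (|v x| - M) ∂μR := pos_iff_ne_zero.mpr h
      have := ge_of_tendsto' htend (fun k => hbound k)
      exact absurd (le_antisymm this zero_le) (by simpa using hpos.ne')
    have hmeas : Measurable fun x : Rn n => ENNReal.ofReal (|v x| - M) :=
      ENNReal.measurable_ofReal.comp ((hv.abs.sub measurable_const))
    have hae0 : ∀ᵐ x ∂(volume.restrict (closedBall (0:Rn n) R)),
        ENNReal.ofReal (|v x| - M) = 0 := (lintegral_eq_zero_iff hmeas).mp hzero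
    rw [ae_restrict_iff' measurableSet_closedBall] at hae0
    filter_upwards [hae0] with x hx hxR
    have h2 := hx hxR
    rw [ENNReal.ofReal_eq_zero] at h2
    linarith
  rw [← ae_all_iff] at hball
  filter_upwards [hball] with x hx
  exact hx ⌈‖x‖⌉₊ (by
    rw [mem_closedBall, dist_zero_right]
    exact Nat.le_ceil _)


end TailAux

theorem tail_convergence_of_bounded_L1loc_convergent_sequence
    (n : ℕ) (hn : 1 ≤ n) (s : ℝ) (hs : s ∈ Set.Ioo (0 : ℝ) 1)
    (Ω : Set (Rn n)) (hΩo : IsOpen Ω) (hΩb : Bornology.IsBounded Ω)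
    (hΩl : HasLipschitzBoundary Ω)
    (u : ℕ → Rn n → ℝ) (hum : ∀ k, Measurable (u k))
    (v : Rn n → ℝ) (hv : Measurable v) (M : ℝ) (hM : 0 < M)
    (hbd : ∀ k, ∀ᵐ x : Rn n ∂volume, |u k x| ≤ M)
    (hloc : ∀ K : Set (Rn n), IsCompact K →
      Tendsto (fun k => ∫⁻ x in K, ENNReal.ofReal |u k x - v x|) atTop (nhds 0)) :
    Tendsto (fun k => tailS n s Ω (fun y => u k y - v y)) atTop (nhds 0) := by
  classical
  rcases Set.eq_empty_or_nonempty Ω with hΩe | hne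
  · have : ∀ k, tailS n s Ω (fun y => u k y - v y) = 0 := by
      intro k
      simp [tailS, hΩe]
    simpa [this] using tendsto_const_nhds
  haveI : Nonempty (Fin n) := ⟨⟨0, hn⟩⟩
  have hnu : Ω ≠ univ := fun h => NormedSpace.unbounded_univ ℝ (Rn n) (h ▸ hΩb)
  have hcne : Ωᶜ.Nonempty := nonempty_compl.mpr hnu
  have hΩm : MeasurableSet Ω := hΩo.measurableSet
  obtain ⟨hfront0, C, hC, δ₀, hδ₀, hstrip⟩ := TailAux.strip_bound Ω hΩo hΩb hΩl hne hnu
  set p : ℝ := (n:ℝ) + s with hpdef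
  have hp : 0 < p := by
    have h0 : (0:ℝ) ≤ (n:ℝ) := Nat.cast_nonneg n
    simp only [hpdef]; linarith [hs.1]
  set φ : ℕ → Rn n → ℝ := fun k y => u k y - v y with hφ
  have hφm : ∀ k, Measurable (φ k) := fun k => (hum k).sub hv
  have hvM := TailAux.limit_bound u v hv M hbd hloc
  have h2M : ∀ k, ∀ᵐ y : Rn n ∂volume, |φ k y| ≤ 2*M := by
    intro k
    filter_upwards [hbd k, hvM] with y h1 h2
    calc |φ k y| ≤ |u k y| + |v y| := abs_sub _ _
      _ ≤ 2*M := by linarith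
  have hD := TailAux.dsum_lt_top s hs Ω hΩo hΩb hcne C hC δ₀ hδ₀ hstrip
  -- kernel
  set kern : Rn n → Rn n → ℝ≥0∞ := fun x y => ENNReal.ofReal ((dist x y ^ p)⁻¹) with hkern
  have hkerm : Measurable (fun q : Rn n × Rn n => kern q.1 q.2) := by
    apply ENNReal.measurable_ofReal.comp
    exact ((Real.continuous_rpow_const hp.le).measurable.comp continuous_dist.measurable).inv
  have hkerm1 : ∀ x, Measurable (kern x) := by
    intro x
    apply ENNReal.measurable_ofReal.comp
    exact ((Real.continuous_rpow_const hp.le).measurable.comp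
      (measurable_const.dist measurable_id)).inv
  -- F identity
  have hFeq : ∀ k (x y : Rn n), ENNReal.ofReal (|φ k y| / dist x y ^ p)
      = ENNReal.ofReal |φ k y| * kern x y := by
    intro k x y
    rw [div_eq_mul_inv, ENNReal.ofReal_mul (abs_nonneg _)]
  have hFm : ∀ k, Measurable (fun q : Rn n × Rn n => ENNReal.ofReal |φ k q.2| * kern q.1 q.2) := by
    intro k
    exact (ENNReal.measurable_ofReal.comp ((hφm k).abs.comp measurable_snd)).mul hkerm
  -- inner kernel bound on Ω
  have hinner : ∀ x ∈ Ω, ∫⁻ y in Ωᶜ, kern x y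
      ≤ TailAux.kconst n s * ENNReal.ofReal ((infDist x Ωᶜ) ^ (-s)) := by
    intro x hx
    have hρ : 0 < infDist x Ωᶜ :=
      (IsClosed.notMem_iff_infDist_pos hΩo.isClosed_compl hcne).mp (by simpa using hx)
    have hsub : Ωᶜ ⊆ (ball x (infDist x Ωᶜ))ᶜ := by
      intro y hy
      simp only [mem_compl_iff, mem_ball, not_lt]
      rw [dist_comm]
      exact infDist_le_dist_of_mem hy
    calc ∫⁻ y in Ωᶜ, kern x y ≤ ∫⁻ y in (ball x (infDist x Ωᶜ))ᶜ, kern x y :=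
        lintegral_mono_set hsub
      _ ≤ _ := TailAux.kernel_tail_bound n hn s hs x _ hρ
  have hrpm : Measurable fun t : ℝ => t ^ (-s) := by measurability
  have hdmeas : Measurable fun x : Rn n => ENNReal.ofReal ((infDist x Ωᶜ) ^ (-s)) :=
    ENNReal.measurable_ofReal.comp (hrpm.comp (continuous_infDist_pt _).measurable)
  have hKtot : ∫⁻ x in Ω, ∫⁻ y in Ωᶜ, kern x y < ⊤ := by
    calc ∫⁻ x in Ω, ∫⁻ y in Ωᶜ, kern x y
        ≤ ∫⁻ x in Ω, TailAux.kconst n s * ENNReal.ofReal ((infDist x Ωᶜ) ^ (-s)) :=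
          setLIntegral_mono' hΩm hinner
      _ = TailAux.kconst n s * ∫⁻ x in Ω, ENNReal.ofReal ((infDist x Ωᶜ) ^ (-s)) :=
          lintegral_const_mul _ hdmeas
      _ < ⊤ := ENNReal.mul_lt_top (TailAux.kconst_ne_top n s).lt_top hD
  -- the measure with kernel density
  set ρm : Measure (Rn n × Rn n) :=
    (volume.prod volume).withDensity (fun q => kern q.1 q.2) with hρm
  have hJeq : ∀ A : Set (Rn n), MeasurableSet A →
      ρm (Ω ×ˢ A) = ∫⁻ x in Ω, ∫⁻ y in A, kern x y := by
    intro A hA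
    rw [hρm, withDensity_apply _ (hΩm.prod hA), ← Measure.prod_restrict,
      lintegral_prod _ hkerm.aemeasurable]
  -- near-boundary exterior sets
  set A1 : ℕ → Set (Rn n) := fun m => Ωᶜ ∩ {y | infDist y Ω < 1/((m:ℝ)+1)} with hA1
  have hA1m : ∀ m, MeasurableSet (A1 m) := fun m =>
    hΩm.compl.inter (measurableSet_lt (continuous_infDist_pt _).measurable measurable_const)
  have hA1anti : Antitone fun m => (Ω ×ˢ A1 m) := by
    intro m m' hmm'
    refine prod_mono subset_rfl ?_
    rintro y ⟨hy1, hy2⟩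
    simp only [mem_setOf_eq] at hy2 ⊢
    refine ⟨hy1, lt_of_lt_of_le hy2 ?_⟩
    apply one_div_le_one_div_of_le
    · positivity
    · have : (m:ℝ) ≤ (m':ℝ) := Nat.cast_le.mpr hmm'
      linarith
  have hIter : ⋂ m, A1 m = frontier Ω := by
    ext y
    simp only [mem_iInter, hA1, mem_inter_iff, mem_setOf_eq]
    constructor
    · intro h
      have hyc : y ∈ Ωᶜ := (h 0).1
      have hd0 : infDist y Ω = 0 := by
        by_contra hne0
        have hpos : 0 < infDist y Ω := lt_of_le_of_ne infDist_nonneg (Ne.symm hne0)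
        obtain ⟨m, hm⟩ := exists_nat_one_div_lt hpos
        exact absurd (h m).2 (not_lt.mpr hm.le)
      have hycl : y ∈ closure Ω := (mem_closure_iff_infDist_zero hne).mpr hd0
      rw [hΩo.frontier_eq]
      exact ⟨hycl, hyc⟩
    · intro hyf
      rw [hΩo.frontier_eq] at hyf
      intro m
      refine ⟨hyf.2, ?_⟩
      have h0 : infDist y Ω = 0 := (mem_closure_iff_infDist_zero hne).mp hyf.1
      rw [h0]
      positivity
  have hρfront : ρm (Ω ×ˢ frontier Ω) = 0 := by
    rw [hρm, withDensity_apply _ (hΩm.prod isClosed_frontier.measurableSet)]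
    refine setLIntegral_measure_zero _ _ ?_
    rw [Measure.prod_prod, hfront0, mul_zero]
  have hJfin : ρm (Ω ×ˢ A1 0) ≠ ⊤ := by
    refine ne_top_of_le_ne_top hKtot.ne ?_
    rw [← hJeq Ωᶜ hΩm.compl]
    exact measure_mono (prod_mono subset_rfl inter_subset_left)
  have hJtend : Tendsto (fun m => ρm (Ω ×ˢ A1 m)) atTop (nhds 0) := by
    have h1 := tendsto_measure_iInter_atTop (μ := ρm)
      (fun m => (hΩm.prod (hA1m m)).nullMeasurableSet) hA1anti ⟨0, hJfin⟩
    have heq : ⋂ m, Ω ×ˢ A1 m = Ω ×ˢ frontier Ω := by rw [← prod_iInter, hIter]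
    rw [heq, hρfront] at h1
    exact h1
  -- far radius
  obtain ⟨R₀, hR₀⟩ := (isBounded_iff_subset_ball 0).mp hΩb
  set R₁ : ℝ := max R₀ 1 with hR₁
  have hR₁pos : 0 < R₁ := lt_of_lt_of_le one_pos (le_max_right _ _)
  have hΩsub : Ω ⊆ ball 0 R₁ := hR₀.trans (ball_subset_ball (le_max_left _ _))
  set Cfar : ℝ≥0∞ := volume Ω *
    (ENNReal.ofReal (2*M) * (ENNReal.ofReal ((2:ℝ)^p) * TailAux.kconst n s)) with hCfar
  have hCfarfin : Cfar ≠ ⊤ := by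
    rw [hCfar]
    exact (ENNReal.mul_lt_top hΩb.measure_lt_top
      (ENNReal.mul_lt_top ENNReal.ofReal_lt_top
        (ENNReal.mul_lt_top ENNReal.ofReal_lt_top (TailAux.kconst_ne_top n s).lt_top))).ne
  have hfarkern : ∀ R : ℝ, 2*R₁ ≤ R → ∀ x ∈ Ω, ∀ y ∈ (ball (0:Rn n) R)ᶜ,
      kern x y ≤ ENNReal.ofReal ((2:ℝ)^p) * kern 0 y := by
    intro R hRR x hx y hy
    have hyn : R ≤ dist (0:Rn n) y := by
      have := (mem_compl_iff _ _).mp hy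
      rw [mem_ball, dist_comm] at this
      linarith [not_lt.mp this]
    have hxn : dist (0:Rn n) x < R₁ := by
      have := hΩsub hx
      rw [mem_ball, dist_comm] at this
      exact this
    have htri := dist_triangle (0:Rn n) x y
    have h1 : dist (0:Rn n) y / 2 ≤ dist x y := by
      have h2 : 2*R₁ ≤ dist (0:Rn n) y := le_trans hRR hyn
      linarith
    have hd2 : (0:ℝ) < dist (0:Rn n) y / 2 := by
      have h2 : 2*R₁ ≤ dist (0:Rn n) y := le_trans hRR hyn
      linarith
    have hk1 : (dist x y ^ p)⁻¹ ≤ ((dist (0:Rn n) y / 2) ^ p)⁻¹ := by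
      refine inv_anti₀ (Real.rpow_pos_of_pos hd2 _) ?_
      exact Real.rpow_le_rpow hd2.le h1 hp.le
    have hk2 : ((dist (0:Rn n) y / 2) ^ p)⁻¹ = (2:ℝ)^p * (dist (0:Rn n) y ^ p)⁻¹ := by
      rw [Real.div_rpow dist_nonneg (by norm_num : (0:ℝ) ≤ 2)]
      rw [inv_div, div_eq_mul_inv]
    calc kern x y ≤ ENNReal.ofReal (((dist (0:Rn n) y / 2) ^ p)⁻¹) :=
        ENNReal.ofReal_le_ofReal hk1
      _ = ENNReal.ofReal ((2:ℝ)^p * (dist (0:Rn n) y ^ p)⁻¹) := by rw [hk2]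
      _ = ENNReal.ofReal ((2:ℝ)^p) * kern 0 y := by
          rw [ENNReal.ofReal_mul (Real.rpow_nonneg (by norm_num) _)]
  -- epsilon argument
  rw [ENNReal.tendsto_atTop_zero]
  intro ε hε
  by_cases hεtop : ε = ⊤
  · exact ⟨0, fun k _ => hεtop ▸ le_top⟩
  have hε3 : (0:ℝ≥0∞) < ε/3 := ENNReal.div_pos hε.ne' (by norm_num)
  -- near parameter
  obtain ⟨m₁, hm₁⟩ := (ENNReal.tendsto_atTop_zero.mp hJtend) ((ε/3) / ENNReal.ofReal (2*M))
    (ENNReal.div_pos hε3.ne' ENNReal.ofReal_ne_top)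
  set δ' : ℝ := 1/((m₁:ℝ)+1) with hδ'
  have hδ'pos : 0 < δ' := by positivity
  have hJm : ρm (Ω ×ˢ A1 m₁) ≤ (ε/3) / ENNReal.ofReal (2*M) := hm₁ m₁ le_rfl
  -- far parameter
  have hfar_tend : Tendsto (fun m : ℕ => Cfar * ENNReal.ofReal ((2*R₁ + (m:ℝ)) ^ (-s)))
      atTop (nhds 0) := by
    have h1 : Tendsto (fun m : ℕ => 2*R₁ + (m:ℝ)) atTop atTop :=
      tendsto_atTop_add_const_left _ _ tendsto_natCast_atTop_atTop
    have h2 := (tendsto_rpow_neg_atTop hs.1).comp h1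
    have h3 := ENNReal.tendsto_ofReal h2
    have h4 := ENNReal.Tendsto.const_mul h3 (Or.inr hCfarfin)
    simpa using h4
  obtain ⟨m₂, hm₂⟩ := (ENNReal.tendsto_atTop_zero.mp hfar_tend) (ε/3) hε3
  set R : ℝ := 2*R₁ + (m₂:ℝ) with hRdef
  have hRlarge : 2*R₁ ≤ R := le_add_of_nonneg_right (Nat.cast_nonneg m₂)
  have hRpos : 0 < R := lt_of_lt_of_le (by linarith) hRlarge
  have hfar3 : Cfar * ENNReal.ofReal (R ^ (-s)) ≤ ε/3 := hm₂ m₂ le_rfl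
  -- bulk parameter
  set c2 : ℝ≥0∞ := volume Ω * ENNReal.ofReal ((δ'^p)⁻¹) with hc2
  have hc2fin : c2 ≠ ⊤ :=
    (ENNReal.mul_lt_top hΩb.measure_lt_top ENNReal.ofReal_lt_top).ne
  have hbulk_tend : Tendsto (fun k => c2 * ∫⁻ y in closedBall (0:Rn n) R,
      ENNReal.ofReal |u k y - v y|) atTop (nhds 0) := by
    have h1 := ENNReal.Tendsto.const_mul
      (hloc (closedBall (0:Rn n) R) (isCompact_closedBall _ _)) (Or.inr hc2fin)
    rw [mul_zero] at h1
    exact h1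
  obtain ⟨N, hN⟩ := (ENNReal.tendsto_atTop_zero.mp hbulk_tend) (ε/3) hε3
  refine ⟨N, fun k hk => ?_⟩
  set A2 : Set (Rn n) := closedBall (0:Rn n) R ∩ {y | δ' ≤ infDist y Ω} with hA2
  set A3 : Set (Rn n) := (ball (0:Rn n) R)ᶜ with hA3
  have hA2m : MeasurableSet A2 := measurableSet_closedBall.inter
    (measurableSet_le measurable_const (continuous_infDist_pt _).measurable)
  have hA3m : MeasurableSet A3 := measurableSet_ball.compl
  have hcov : Ωᶜ ⊆ (A1 m₁ ∪ A2) ∪ A3 := by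
    intro y hy
    by_cases hyb : y ∈ ball (0:Rn n) R
    · by_cases hyd : infDist y Ω < δ'
      · exact Or.inl (Or.inl ⟨hy, hyd⟩)
      · exact Or.inl (Or.inr ⟨ball_subset_closedBall hyb, not_lt.mp hyd⟩)
    · exact Or.inr hyb
  set Fk : Rn n → Rn n → ℝ≥0∞ := fun x y => ENNReal.ofReal |φ k y| * kern x y with hFk
  have htaileq : tailS n s Ω (fun y => u k y - v y)
      = ∫⁻ x in Ω, ∫⁻ y in Ωᶜ, Fk x y := by
    refine lintegral_congr fun x => lintegral_congr fun y => ?_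
    exact hFeq k x y
  rw [htaileq]
  have hmi : ∀ A : Set (Rn n), Measurable fun x => ∫⁻ y in A, Fk x y := by
    intro A
    exact Measurable.lintegral_prod_right (f := Fk) (hFm k)
  have hsplit : ∀ x, ∫⁻ y in Ωᶜ, Fk x y
      ≤ (∫⁻ y in A1 m₁, Fk x y) + (∫⁻ y in A2, Fk x y) + (∫⁻ y in A3, Fk x y) := by
    intro x
    calc ∫⁻ y in Ωᶜ, Fk x y ≤ ∫⁻ y in (A1 m₁ ∪ A2) ∪ A3, Fk x y := lintegral_mono_set hcov
      _ ≤ (∫⁻ y in A1 m₁ ∪ A2, Fk x y) + ∫⁻ y in A3, Fk x y := lintegral_union_le _ _ _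
      _ ≤ _ := add_le_add_left (lintegral_union_le _ _ _) _
  have houter : ∫⁻ x in Ω, ∫⁻ y in Ωᶜ, Fk x y
      ≤ (∫⁻ x in Ω, ∫⁻ y in A1 m₁, Fk x y) + (∫⁻ x in Ω, ∫⁻ y in A2, Fk x y)
        + (∫⁻ x in Ω, ∫⁻ y in A3, Fk x y) := by
    calc ∫⁻ x in Ω, ∫⁻ y in Ωᶜ, Fk x y
        ≤ ∫⁻ x in Ω, ((∫⁻ y in A1 m₁, Fk x y) + (∫⁻ y in A2, Fk x y)
            + (∫⁻ y in A3, Fk x y)) := lintegral_mono hsplit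
      _ = _ := by
          rw [lintegral_add_left' (f := fun x => (∫⁻ y in A1 m₁, Fk x y) + ∫⁻ y in A2, Fk x y)
              ((hmi (A1 m₁)).aemeasurable.add (hmi A2).aemeasurable),
            lintegral_add_left' (hmi (A1 m₁)).aemeasurable]
  have hT1 : ∫⁻ x in Ω, ∫⁻ y in A1 m₁, Fk x y ≤ ε/3 := by
    have hinner1 : ∀ x, ∫⁻ y in A1 m₁, Fk x y
        ≤ ENNReal.ofReal (2*M) * ∫⁻ y in A1 m₁, kern x y := by
      intro x
      have hae : ∀ᵐ y ∂(volume.restrict (A1 m₁)),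
          Fk x y ≤ ENNReal.ofReal (2*M) * kern x y := by
        filter_upwards [ae_restrict_of_ae (h2M k)] with y hy
        exact mul_le_mul_left (ENNReal.ofReal_le_ofReal hy) _
      calc ∫⁻ y in A1 m₁, Fk x y ≤ ∫⁻ y in A1 m₁, ENNReal.ofReal (2*M) * kern x y :=
          lintegral_mono_ae hae
        _ = ENNReal.ofReal (2*M) * ∫⁻ y in A1 m₁, kern x y :=
          lintegral_const_mul _ (hkerm1 x)
    calc ∫⁻ x in Ω, ∫⁻ y in A1 m₁, Fk x y
        ≤ ∫⁻ x in Ω, ENNReal.ofReal (2*M) * ∫⁻ y in A1 m₁, kern x y := lintegral_mono hinner1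
      _ = ENNReal.ofReal (2*M) * ∫⁻ x in Ω, ∫⁻ y in A1 m₁, kern x y :=
          lintegral_const_mul _ (Measurable.lintegral_prod_right (f := kern) hkerm)
      _ = ENNReal.ofReal (2*M) * ρm (Ω ×ˢ A1 m₁) := by rw [hJeq _ (hA1m m₁)]
      _ ≤ ENNReal.ofReal (2*M) * ((ε/3) / ENNReal.ofReal (2*M)) := mul_le_mul_right hJm _
      _ ≤ ε/3 := ENNReal.mul_div_le
  have hT2 : ∫⁻ x in Ω, ∫⁻ y in A2, Fk x y ≤ ε/3 := by
    have hinner2 : ∀ x ∈ Ω, ∫⁻ y in A2, Fk x y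
        ≤ (∫⁻ y in closedBall (0:Rn n) R, ENNReal.ofReal |u k y - v y|)
          * ENNReal.ofReal ((δ'^p)⁻¹) := by
      intro x hx
      have hker2 : ∀ y ∈ A2, kern x y ≤ ENNReal.ofReal ((δ'^p)⁻¹) := by
        rintro y ⟨hy1, hy2⟩
        simp only [mem_setOf_eq] at hy2
        have hdxy : δ' ≤ dist x y := by
          have h1 : infDist y Ω ≤ dist y x := infDist_le_dist_of_mem hx
          rw [dist_comm] at h1
          linarith
        refine ENNReal.ofReal_le_ofReal ?_
        refine inv_anti₀ (Real.rpow_pos_of_pos hδ'pos _) ?_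
        exact Real.rpow_le_rpow hδ'pos.le hdxy hp.le
      calc ∫⁻ y in A2, Fk x y
          ≤ ∫⁻ y in A2, ENNReal.ofReal |φ k y| * ENNReal.ofReal ((δ'^p)⁻¹) :=
            setLIntegral_mono' hA2m (fun y hy => mul_le_mul_right (hker2 y hy) _)
        _ = (∫⁻ y in A2, ENNReal.ofReal |φ k y|) * ENNReal.ofReal ((δ'^p)⁻¹) :=
            lintegral_mul_const' _ _ ENNReal.ofReal_ne_top
        _ ≤ (∫⁻ y in closedBall (0:Rn n) R, ENNReal.ofReal |φ k y|)
            * ENNReal.ofReal ((δ'^p)⁻¹) :=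
            mul_le_mul_left (lintegral_mono_set inter_subset_left) _
    calc ∫⁻ x in Ω, ∫⁻ y in A2, Fk x y
        ≤ ∫⁻ _x in Ω, ((∫⁻ y in closedBall (0:Rn n) R, ENNReal.ofReal |u k y - v y|)
            * ENNReal.ofReal ((δ'^p)⁻¹)) := setLIntegral_mono' hΩm hinner2
      _ = ((∫⁻ y in closedBall (0:Rn n) R, ENNReal.ofReal |u k y - v y|)
            * ENNReal.ofReal ((δ'^p)⁻¹)) * volume Ω := setLIntegral_const _ _
      _ = c2 * ∫⁻ y in closedBall (0:Rn n) R, ENNReal.ofReal |u k y - v y| := by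
          rw [hc2]; ring
      _ ≤ ε/3 := hN k hk
  have hT3 : ∫⁻ x in Ω, ∫⁻ y in A3, Fk x y ≤ ε/3 := by
    have hinner3 : ∀ x ∈ Ω, ∫⁻ y in A3, Fk x y
        ≤ ENNReal.ofReal (2*M) * (ENNReal.ofReal ((2:ℝ)^p)
          * (TailAux.kconst n s * ENNReal.ofReal (R ^ (-s)))) := by
      intro x hx
      have hae : ∀ᵐ y ∂(volume.restrict A3),
          Fk x y ≤ ENNReal.ofReal (2*M) * (ENNReal.ofReal ((2:ℝ)^p) * kern 0 y) := by
        filter_upwards [ae_restrict_of_ae (h2M k), ae_restrict_mem hA3m] with y hy hymem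
        calc Fk x y ≤ ENNReal.ofReal (2*M) * kern x y :=
            mul_le_mul_left (ENNReal.ofReal_le_ofReal hy) _
          _ ≤ _ := mul_le_mul_right (hfarkern R hRlarge x hx y hymem) _
      calc ∫⁻ y in A3, Fk x y
          ≤ ∫⁻ y in A3, ENNReal.ofReal (2*M) * (ENNReal.ofReal ((2:ℝ)^p) * kern 0 y) :=
            lintegral_mono_ae hae
        _ = ENNReal.ofReal (2*M) * (ENNReal.ofReal ((2:ℝ)^p) * ∫⁻ y in A3, kern 0 y) := by
            rw [lintegral_const_mul _ ((hkerm1 0).const_mul _),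
              lintegral_const_mul _ (hkerm1 0)]
        _ ≤ _ := by
            refine mul_le_mul_right (mul_le_mul_right ?_ _) _
            exact TailAux.kernel_tail_bound n hn s hs 0 R hRpos
    calc ∫⁻ x in Ω, ∫⁻ y in A3, Fk x y
        ≤ ∫⁻ _x in Ω, (ENNReal.ofReal (2*M) * (ENNReal.ofReal ((2:ℝ)^p)
            * (TailAux.kconst n s * ENNReal.ofReal (R ^ (-s))))) := setLIntegral_mono' hΩm hinner3
      _ = (ENNReal.ofReal (2*M) * (ENNReal.ofReal ((2:ℝ)^p)
            * (TailAux.kconst n s * ENNReal.ofReal (R ^ (-s))))) * volume Ω := setLIntegral_const _ _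
      _ = Cfar * ENNReal.ofReal (R ^ (-s)) := by rw [hCfar]; ring
      _ ≤ ε/3 := hfar3
  calc ∫⁻ x in Ω, ∫⁻ y in Ωᶜ, Fk x y ≤ _ := houter
    _ ≤ ε/3 + ε/3 + ε/3 := add_le_add (add_le_add hT1 hT2) hT3
    _ = ε := ENNReal.add_thirds ε


end
end

section
/- Let E₀ ⊂ 𝒞Ω and let E, F ⊂ ℝⁿ both be s-minimal sets in Ω with respect to E₀. Then E ∪ F and E ∩ F are also s-minimal sets in Ω with respect to E₀. -/
open MeasureTheory Set Filter Metric ENNReal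

noncomputable section
set_option maxHeartbeats 1000000

lemma chi_submod {n : ℕ} (E F : Set (Rn n)) (x y : Rn n) :
    |chi (E ∪ F) x - chi (E ∪ F) y| + |chi (E ∩ F) x - chi (E ∩ F) y| ≤
      |chi E x - chi E y| + |chi F x - chi F y| := by
  classical
  simp only [chi, Set.indicator]
  by_cases hx1 : x ∈ E <;> by_cases hx2 : x ∈ F <;> by_cases hy1 : y ∈ E <;>
    by_cases hy2 : y ∈ F <;>
    simp [hx1, hx2, hy1, hy2, Set.mem_union, Set.mem_inter_iff] <;> norm_num

lemma ofReal_div_add_div (x y c : ℝ) (hx : 0 ≤ x) (hy : 0 ≤ y) (hc : 0 ≤ c) :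
    ENNReal.ofReal ((x + y) / c) = ENNReal.ofReal (x / c) + ENNReal.ofReal (y / c) := by
  rw [← ENNReal.ofReal_add (div_nonneg hx hc) (div_nonneg hy hc), ← add_div]

lemma g_meas {n : ℕ} (s : ℝ) (hns : 0 ≤ (n : ℝ) + s) {X : Set (Rn n)} (hX : MeasurableSet X) :
    Measurable fun p : Rn n × Rn n =>
      ENNReal.ofReal (|chi X p.1 - chi X p.2| / dist p.1 p.2 ^ ((n : ℝ) + s)) := by
  have hchi : Measurable (chi X) := measurable_const.indicator hX
  have hd : Measurable fun p : Rn n × Rn n => dist p.1 p.2 ^ ((n : ℝ) + s) :=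
    ((Real.continuous_rpow_const hns).comp
      (Continuous.dist continuous_fst continuous_snd)).measurable
  exact (((((hchi.comp measurable_fst).sub (hchi.comp measurable_snd)).abs).div
    hd)).ennreal_ofReal

lemma perS_submod {n : ℕ} (s : ℝ) (hns : 0 ≤ (n : ℝ) + s) (Ω E F : Set (Rn n)) (hE : MeasurableSet E)
    (hF : MeasurableSet F) :
    perS n s Ω (E ∪ F) + perS n s Ω (E ∩ F) ≤ perS n s Ω E + perS n s Ω F := by
  unfold perS
  rw [← mul_add, ← mul_add]
  refine mul_le_mul_right ?_ _
  calc (∫⁻ p in QQ Ω, ENNReal.ofReal (|chi (E ∪ F) p.1 - chi (E ∪ F) p.2| / dist p.1 p.2 ^ ((n : ℝ) + s)))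
        + ∫⁻ p in QQ Ω, ENNReal.ofReal (|chi (E ∩ F) p.1 - chi (E ∩ F) p.2| / dist p.1 p.2 ^ ((n : ℝ) + s))
      ≤ ∫⁻ p in QQ Ω, (ENNReal.ofReal (|chi (E ∪ F) p.1 - chi (E ∪ F) p.2| / dist p.1 p.2 ^ ((n : ℝ) + s))
          + ENNReal.ofReal (|chi (E ∩ F) p.1 - chi (E ∩ F) p.2| / dist p.1 p.2 ^ ((n : ℝ) + s))) :=
        (lintegral_add_left (g_meas s hns (hE.union hF)) _).symm.le
    _ ≤ ∫⁻ p in QQ Ω, (ENNReal.ofReal (|chi E p.1 - chi E p.2| / dist p.1 p.2 ^ ((n : ℝ) + s))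
          + ENNReal.ofReal (|chi F p.1 - chi F p.2| / dist p.1 p.2 ^ ((n : ℝ) + s))) := by
        refine lintegral_mono fun p => ?_
        have hc : (0 : ℝ) ≤ dist p.1 p.2 ^ ((n : ℝ) + s) := Real.rpow_nonneg dist_nonneg _
        rw [← ofReal_div_add_div _ _ _ (abs_nonneg _) (abs_nonneg _) hc,
            ← ofReal_div_add_div _ _ _ (abs_nonneg _) (abs_nonneg _) hc]
        refine ENNReal.ofReal_le_ofReal ?_
        rcases hc.eq_or_lt with h0 | h0
        · rw [← h0]; simp
        · exact (div_le_div_iff_of_pos_right h0).mpr (chi_submod E F p.1 p.2)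
    _ = _ := lintegral_add_left (g_meas s hns hE) _

theorem union_and_inter_of_minimal_sets_are_minimal
    (n : ℕ) (hn : 1 ≤ n) (s : ℝ) (hs : s ∈ Set.Ioo (0 : ℝ) 1)
    (Ω : Set (Rn n)) (hΩo : IsOpen Ω) (hΩb : Bornology.IsBounded Ω)
    (hΩl : HasLipschitzBoundary Ω)
    (E₀ E F : Set (Rn n)) (hE₀ : E₀ ⊆ Ωᶜ)
    (hE : IsMinimalSet n s Ω E) (hEdat : E \ Ω = E₀)
    (hF : IsMinimalSet n s Ω F) (hFdat : F \ Ω = E₀) :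
    (IsMinimalSet n s Ω (E ∪ F) ∧ (E ∪ F) \ Ω = E₀) ∧
    (IsMinimalSet n s Ω (E ∩ F) ∧ (E ∩ F) \ Ω = E₀) := by
  obtain ⟨hEm, hEfin, hEmin⟩ := hE
  obtain ⟨hFm, hFfin, hFmin⟩ := hF
  have hdiffU : (E ∪ F) \ Ω = E₀ := by
    rw [Set.union_diff_distrib, hEdat, hFdat, Set.union_self]
  have hdiffI : (E ∩ F) \ Ω = E₀ := by
    have : (E ∩ F) \ Ω = (E \ Ω) ∩ (F \ Ω) := by ext z; simp [Set.mem_diff]; tauto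
    rw [this, hEdat, hFdat, Set.inter_self]
  have hsub := perS_submod s (add_nonneg (Nat.cast_nonneg n) hs.1.le) Ω E F hEm hFm
  have hUleE : perS n s Ω E ≤ perS n s Ω (E ∪ F) :=
    hEmin (E ∪ F) (hEm.union hFm) (hdiffU.trans hEdat.symm)
  have hIleF : perS n s Ω F ≤ perS n s Ω (E ∩ F) :=
    hFmin (E ∩ F) (hEm.inter hFm) (hdiffI.trans hFdat.symm)
  have hEF_top : perS n s Ω E + perS n s Ω F < ⊤ := ENNReal.add_lt_top.mpr ⟨hEfin, hFfin⟩
  have hUfin : perS n s Ω (E ∪ F) < ⊤ :=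
    lt_of_le_of_lt (le_trans le_self_add hsub) hEF_top
  have hIfin : perS n s Ω (E ∩ F) < ⊤ :=
    lt_of_le_of_lt (le_trans le_add_self hsub) hEF_top
  -- cancel to get the reverse inequalities
  have hIleF' : perS n s Ω (E ∩ F) ≤ perS n s Ω F := by
    have h1 : perS n s Ω (E ∪ F) + perS n s Ω (E ∩ F)
        ≤ perS n s Ω (E ∪ F) + perS n s Ω F :=
      hsub.trans (add_le_add_left hUleE _)
    exact (ENNReal.add_le_add_iff_left hUfin.ne).mp h1
  have hUleE' : perS n s Ω (E ∪ F) ≤ perS n s Ω E := by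
    have h1 : perS n s Ω (E ∪ F) + perS n s Ω (E ∩ F)
        ≤ perS n s Ω E + perS n s Ω (E ∩ F) :=
      hsub.trans (add_le_add_right hIleF _)
    exact (ENNReal.add_le_add_iff_right hIfin.ne).mp h1
  refine ⟨⟨⟨hEm.union hFm, hUfin, fun G hGm hG => ?_⟩, hdiffU⟩,
      ⟨⟨hEm.inter hFm, hIfin, fun G hGm hG => ?_⟩, hdiffI⟩⟩
  · exact hUleE'.trans (hEmin G hGm (hG.trans (hdiffU.trans hEdat.symm)))
  · exact hIleF'.trans (hFmin G hGm (hG.trans (hdiffI.trans hFdat.symm)))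

end
end
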